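/- arXiv:1903.03491 — 6 statements merged into one kernel-verified Lean document; each statement's English description precedes it below -/
import Mathlib

section
/- Let a > 0, n a positive integer, and W̃ an N×N matrix with nonnegative entries and positive diagonal entries w̃_{ii} > 0. Let v : [0,T) → ℝ^N be differentiable with v(0) ∈ (0,1)^N and satisfy for all t the gradient-flow system ∂_t v_i = Σ_{j : v_j ≠ v_i} w̃_{ij}·(Φ_{a,n}(v_j − v_i) − Φ_{a,n}(v_j + v_i)) − Σ_{j : v_j = v_i} w̃_{ij}·Φ_{a,n}(2 v_i). Then v(t) ∈ (0,1)^N for all t ∈ [0,T); i.e., no position ever reaches the domain boundaries 0 or 1. -/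
open scoped Classical
open Filter Set
open Topology

/-- Flux `Φ_{a,n}(s) = a·n·(s−1)^(2n−1)` for `s ≥ 0`, extended by
`Φ_{a,n}(s) = a·n·(s+1)^(2n−1)` for `s < 0`. -/
noncomputable def flux (a : ℝ) (n : ℕ) (s : ℝ) : ℝ :=
  if 0 ≤ s then a * n * (s - 1) ^ (2 * n - 1) else a * n * (s + 1) ^ (2 * n - 1)

lemma odd_aux (n : ℕ) (hn : 0 < n) : Odd (2 * n - 1) := ⟨n - 1, by omega⟩

lemma flux_zero (a : ℝ) (n : ℕ) (hn : 0 < n) : flux a n 0 = -(a * n) := by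
  rw [flux, if_pos le_rfl, show (0:ℝ) - 1 = -1 by ring, (odd_aux n hn).neg_one_pow]
  ring

lemma flux_two (a : ℝ) (n : ℕ) : flux a n 2 = a * n := by
  rw [flux, if_pos (by norm_num)]
  norm_num

lemma flux_diff (a : ℝ) (n : ℕ) (x : ℝ) (h0 : 0 ≤ x) (h1 : x < 1) :
    flux a n (x - 1) - flux a n (x + 1) = 0 := by
  rw [flux, flux, if_neg (by linarith), if_pos (by linarith)]
  ring_nf

lemma deriv_nonpos_of (f : ℝ → ℝ) (c d : ℝ) (hc : 0 < c) (h : HasDerivAt f d c)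
    (h2 : ∀ s, 0 < s → s < c → f c < f s) : d ≤ 0 := by
  by_contra hd
  push_neg at hd
  have hs : Tendsto (slope f c) (𝓝[<] c) (𝓝 d) :=
    (hasDerivAt_iff_tendsto_slope.mp h).mono_left
      (nhdsWithin_mono _ (fun x hx => ne_of_lt hx))
  have h1 : ∀ᶠ s in 𝓝[<] c, 0 < slope f c s := hs.eventually (eventually_gt_nhds hd)
  have h3 : Ioo 0 c ∈ 𝓝[<] c := Ioo_mem_nhdsLT_of_mem ⟨hc, le_refl c⟩
  obtain ⟨s, hs1, hs2⟩ := (h1.and (eventually_of_mem h3 (fun x hx => hx))).exists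
  have hlt : f s - f c < 0 := by
    rw [slope_def_field] at hs1
    rcases div_pos_iff.mp hs1 with ⟨_, h⟩ | ⟨h, _⟩
    · linarith [hs2.2]
    · exact h
  linarith [h2 s hs2.1 hs2.2]

lemma deriv_nonneg_of (f : ℝ → ℝ) (c d : ℝ) (hc : 0 < c) (h : HasDerivAt f d c)
    (h2 : ∀ s, 0 < s → s < c → f s < f c) : 0 ≤ d := by
  have := deriv_nonpos_of (fun t => -(f t)) c (-d) hc h.neg
    (fun s h1 h2' => by simpa using (h2 s h1 h2'))
  linarith


/-- Avoidance of the range interval boundaries: a differentiable solution of the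
gradient-flow system starting in `(0,1)^N` stays in `(0,1)^N` for all `t ∈ [0,T)`. -/
theorem stmt3 (a : ℝ) (ha : 0 < a) (n : ℕ) (hn : 0 < n) (N : ℕ)
    (W : Matrix (Fin N) (Fin N) ℝ) (hW : ∀ i j, 0 ≤ W i j) (hdiag : ∀ i, 0 < W i i)
    (T : ℝ) (v : ℝ → Fin N → ℝ)
    (hinit : ∀ i, v 0 i ∈ Set.Ioo (0 : ℝ) 1)
    (hode : ∀ t ∈ Set.Ico (0 : ℝ) T, ∀ i, HasDerivAt (fun s => v s i)
      ((∑ j ∈ Finset.univ.filter (fun j => v t j ≠ v t i),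
          W i j * (flux a n (v t j - v t i) - flux a n (v t j + v t i))) -
        ∑ j ∈ Finset.univ.filter (fun j => v t j = v t i),
          W i j * flux a n (2 * v t i)) t) :
    ∀ t ∈ Set.Ico (0 : ℝ) T, ∀ i, v t i ∈ Set.Ioo (0 : ℝ) 1 := by
  intro t0 ht0
  by_contra hbad
  push_neg at hbad
  obtain ⟨i0, hi0⟩ := hbad
  have han : 0 < a * n := mul_pos ha (by exact_mod_cast hn)
  -- the bad set
  set E : Set ℝ := ⋃ i, (Icc 0 t0 ∩ (fun t => v t i) ⁻¹' (Ioo (0:ℝ) 1)ᶜ) with hEdef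
  have hmemE : ∀ t, t ∈ E ↔ (t ∈ Icc 0 t0 ∧ ∃ i, v t i ∉ Ioo (0:ℝ) 1) := by
    intro t
    simp only [hEdef, mem_iUnion, mem_inter_iff, mem_preimage, mem_compl_iff]
    tauto
  have hEne : E.Nonempty := ⟨t0, (hmemE t0).mpr ⟨⟨ht0.1, le_refl _⟩, i0, hi0⟩⟩
  have hca : ∀ s ∈ Icc (0:ℝ) t0, ∀ i, ContinuousAt (fun u => v u i) s := by
    intro s hs i
    exact (hode s ⟨hs.1, lt_of_le_of_lt hs.2 ht0.2⟩ i).continuousAt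
  have hEclosed : IsClosed E := by
    apply isClosed_iUnion_of_finite
    intro i
    exact ContinuousOn.preimage_isClosed_of_isClosed
      (fun s hs => (hca s hs i).continuousWithinAt) isClosed_Icc isOpen_Ioo.isClosed_compl

  have hbdd : BddBelow E := ⟨0, fun x hx => ((hmemE x).mp hx).1.1⟩
  set c := sInf E with hcdef
  have hcE : c ∈ E := hEclosed.csInf_mem hEne hbdd
  obtain ⟨hcIcc, i, hi⟩ := (hmemE c).mp hcE
  have hcpos : 0 < c := by
    rcases hcIcc.1.eq_or_lt with h | h
    · exfalso; rw [← h] at hi; exact hi (hinit i)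
    · exact h
  have hcT : c ∈ Ico (0:ℝ) T := ⟨hcIcc.1, lt_of_le_of_lt hcIcc.2 ht0.2⟩
  have hlt : ∀ s, 0 ≤ s → s < c → ∀ j, v s j ∈ Ioo (0:ℝ) 1 := by
    intro s hs0 hsc j
    by_contra hj
    have : s ∈ E := (hmemE s).mpr ⟨⟨hs0, le_trans hsc.le hcIcc.2⟩, j, hj⟩
    exact absurd (csInf_le hbdd this) (not_le.mpr hsc)
  have hIcc : ∀ j, v c j ∈ Icc (0:ℝ) 1 := by
    intro j
    have htend : Tendsto (fun s => v s j) (𝓝[<] c) (𝓝 (v c j)) :=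
      ((hca c hcIcc j).continuousWithinAt)
    have hev : ∀ᶠ s in 𝓝[<] c, v s j ∈ Icc (0:ℝ) 1 := by
      filter_upwards [eventually_of_mem (Ioo_mem_nhdsLT_of_mem ⟨hcpos, le_refl c⟩)
        (fun x hx => hx)] with s hs
      exact Ioo_subset_Icc_self (hlt s hs.1.le hs.2 j)
    exact isClosed_Icc.mem_of_tendsto htend hev
  have h01 : v c i = 0 ∨ v c i = 1 := by
    rcases (hIcc i).1.eq_or_lt with h | h
    · exact Or.inl h.symm
    rcases (hIcc i).2.eq_or_lt with h' | h'
    · exact Or.inr h'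
    · exact absurd ⟨h, h'⟩ hi
  have hD := hode c hcT i
  rcases h01 with h0 | h1
  · -- v c i = 0 : derivative is positive, but approach from above forces ≤ 0
    have hsum1 : (∑ j ∈ Finset.univ.filter (fun j => v c j ≠ v c i),
        W i j * (flux a n (v c j - v c i) - flux a n (v c j + v c i))) = 0 := by
      apply Finset.sum_eq_zero
      intro j _
      rw [h0, sub_zero, add_zero, sub_self, mul_zero]
    have hsum2 : (∑ j ∈ Finset.univ.filter (fun j => v c j = v c i),
        W i j * flux a n (2 * v c i)) =
        -∑ j ∈ Finset.univ.filter (fun j => v c j = v c i), W i j * (a * n) := by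
      rw [← Finset.sum_neg_distrib]
      apply Finset.sum_congr rfl
      intro j _
      rw [h0, mul_zero, flux_zero a n hn]
      ring
    have hpos : 0 < ∑ j ∈ Finset.univ.filter (fun j => v c j = v c i), W i j * (a * n) := by
      apply Finset.sum_pos'
      · intro j _; exact mul_nonneg (hW i j) han.le
      · exact ⟨i, Finset.mem_filter.mpr ⟨Finset.mem_univ i, rfl⟩, mul_pos (hdiag i) han⟩
    have hle := deriv_nonpos_of (fun s => v s i) c _ hcpos hD
      (fun s hs1 hs2 => by show v c i < v s i; rw [h0]; exact (hlt s hs1.le hs2 i).1)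
    rw [hsum1, hsum2] at hle
    linarith
  · -- v c i = 1 : derivative is negative, but approach from below forces ≥ 0
    have hsum1 : (∑ j ∈ Finset.univ.filter (fun j => v c j ≠ v c i),
        W i j * (flux a n (v c j - v c i) - flux a n (v c j + v c i))) = 0 := by
      apply Finset.sum_eq_zero
      intro j hj
      have hjne : v c j ≠ v c i := (Finset.mem_filter.mp hj).2
      have hj1 : v c j < 1 := by
        rcases (hIcc j).2.eq_or_lt with h | h
        · exact absurd (h.trans h1.symm) hjne
        · exact h
      rw [h1, flux_diff a n (v c j) (hIcc j).1 hj1, mul_zero]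
    have hsum2 : (∑ j ∈ Finset.univ.filter (fun j => v c j = v c i),
        W i j * flux a n (2 * v c i)) =
        ∑ j ∈ Finset.univ.filter (fun j => v c j = v c i), W i j * (a * n) := by
      apply Finset.sum_congr rfl
      intro j _
      rw [h1, mul_one, flux_two a n]
    have hpos : 0 < ∑ j ∈ Finset.univ.filter (fun j => v c j = v c i), W i j * (a * n) := by
      apply Finset.sum_pos'
      · intro j _; exact mul_nonneg (hW i j) han.le
      · exact ⟨i, Finset.mem_filter.mpr ⟨Finset.mem_univ i, rfl⟩, mul_pos (hdiag i) han⟩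
    have hge := deriv_nonneg_of (fun s => v s i) c _ hcpos hD
      (fun s hs1 hs2 => by show v s i < v c i; rw [h1]; exact (hlt s hs1.le hs2 i).2)
    rw [hsum1, hsum2] at hge
    linarith
end

section
/- Let a > 0 and n = 1, and let W̃ be an N×N matrix with nonnegative entries and positive diagonal entries. Then at every point v ∈ (0,1)^N whose entries are pairwise distinct, the Hessian matrix of the energy E(·,W̃) is positive definite. -/
open Filter Topology

/-- Penaliser `Ψ̃_{a,n}(s) = a·((|s|−1)^(2n) − 1)`; here `n = 1`. -/
noncomputable def psi (a : ℝ) (n : ℕ) (s : ℝ) : ℝ := a * ((|s| - 1) ^ (2 * n) - 1)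

/-- Energy `E(v,W̃) = (1/2)·Σᵢ Σⱼ w̃ᵢⱼ·(Ψ̃(vⱼ−vᵢ) + Ψ̃(vⱼ+vᵢ))`. -/
noncomputable def energy {N : ℕ} (a : ℝ) (n : ℕ) (W : Matrix (Fin N) (Fin N) ℝ)
    (v : Fin N → ℝ) : ℝ :=
  (1 / 2) * ∑ i, ∑ j, W i j * (psi a n (v j - v i) + psi a n (v j + v i))

/-- Hessian matrix of the energy at `v`. -/
noncomputable def hessianE {N : ℕ} (a : ℝ) (n : ℕ) (W : Matrix (Fin N) (Fin N) ℝ)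
    (v : Fin N → ℝ) : Matrix (Fin N) (Fin N) ℝ :=
  fun i j => iteratedFDeriv ℝ 2 (energy a n W) v ![Pi.single i 1, Pi.single j 1]

/-- Coordinate projection as a continuous linear map. -/
noncomputable def projR {N : ℕ} (k : Fin N) : (Fin N → ℝ) →L[ℝ] ℝ :=
  ContinuousLinearMap.proj k

lemma hess_f {N : ℕ} (d : Fin N → ℝ) (ℓ : (Fin N → ℝ) →L[ℝ] ℝ) (v u w : Fin N → ℝ) :
    iteratedFDeriv ℝ 2 (fun x => (∑ k, d k * x k ^ 2) + ℓ x) v ![u, w]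
      = ∑ k, 2 * d k * u k * w k := by
  classical
  set M : (Fin N → ℝ) →L[ℝ] (Fin N → ℝ) →L[ℝ] ℝ :=
    ∑ k, (2 * d k) • ((projR k).smulRight (projR k)) with hMdef
  have hterm : ∀ (k : Fin N) (x : Fin N → ℝ),
      HasFDerivAt (fun x : Fin N → ℝ => d k * x k ^ 2) ((2 * d k * x k) • projR k) x := by
    intro k x
    have h1 : HasFDerivAt (fun y : Fin N → ℝ => y k) (projR k) x :=
      (projR k).hasFDerivAt
    have h2 : HasFDerivAt (fun y : Fin N → ℝ => d k * (y k * y k))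
        ((d k) • ((x k) • projR k + (x k) • projR k)) x :=
      (h1.mul h1).const_mul (d k)
    have heq : (fun y : Fin N → ℝ => d k * (y k * y k))
        = fun y : Fin N → ℝ => d k * y k ^ 2 := by
      funext y; ring
    rw [heq] at h2
    convert h2 using 1
    ext y
    simp only [ContinuousLinearMap.smul_apply, ContinuousLinearMap.add_apply, smul_eq_mul]
    ring
  have hDf : ∀ x : Fin N → ℝ,
      HasFDerivAt (fun x => (∑ k, d k * x k ^ 2) + ℓ x) (M x + ℓ) x := by
    intro x
    have hs : HasFDerivAt (fun x : Fin N → ℝ => ∑ k, d k * x k ^ 2)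
        (∑ k, (2 * d k * x k) • projR k) x :=
      HasFDerivAt.fun_sum fun k _ => hterm k x
    have hM : M x = ∑ k, (2 * d k * x k) • projR k := by
      ext y
      simp only [hMdef, ContinuousLinearMap.sum_apply, ContinuousLinearMap.smul_apply,
        ContinuousLinearMap.smulRight_apply, smul_eq_mul, projR,
        ContinuousLinearMap.proj_apply]
      exact Finset.sum_congr rfl fun k _ => by ring
    rw [hM]
    exact hs.add ℓ.hasFDerivAt
  have hfd : fderiv ℝ (fun x => (∑ k, d k * x k ^ 2) + ℓ x) = fun x => M x + ℓ :=
    funext fun x => (hDf x).fderiv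
  have hfd2 : fderiv ℝ (fun x : Fin N → ℝ => M x + ℓ) v = M :=
    (M.hasFDerivAt.add_const ℓ).fderiv
  rw [iteratedFDeriv_two_apply, hfd, hfd2]
  show M (![u, w] 0) (![u, w] 1) = _
  simp only [Matrix.cons_val_zero, Matrix.cons_val_one, Matrix.head_cons, hMdef,
    ContinuousLinearMap.sum_apply, ContinuousLinearMap.smul_apply,
    ContinuousLinearMap.smulRight_apply, smul_eq_mul]
  refine Finset.sum_congr rfl fun k _ => ?_
  show 2 * d k * (projR k u * projR k w) = _
  simp only [projR, ContinuousLinearMap.proj_apply]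
  ring

/-- For `a > 0`, `n = 1`, and a nonnegative weight matrix with positive
diagonal, the Hessian of the energy is positive definite at every `v ∈ (0,1)^N` with pairwise
distinct entries. -/
theorem stmt5 (a : ℝ) (ha : 0 < a) (N : ℕ)
    (W : Matrix (Fin N) (Fin N) ℝ) (hW : ∀ i j, 0 ≤ W i j) (hdiag : ∀ i, 0 < W i i)
    (v : Fin N → ℝ) (hv : ∀ i, v i ∈ Set.Ioo (0 : ℝ) 1)
    (hdist : ∀ i j, i ≠ j → v i ≠ v j) :
    (hessianE a 1 W v).PosDef := by
  classical
  set ε : Fin N → Fin N → ℝ := fun p q => Real.sign (v q - v p) with hεdef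
  set d : Fin N → ℝ := fun k => a * ((∑ q, W k q) + ∑ p, W p k) with hddef
  set ℓ : (Fin N → ℝ) →L[ℝ] ℝ :=
    ∑ p, ∑ q, (-(a * W p q)) • (((ε p q + 1) • projR q) + ((1 - ε p q) • projR p)) with hℓdef
  have hℓx : ∀ x : Fin N → ℝ,
      ℓ x = ∑ p, ∑ q, -(a * W p q) * ((ε p q + 1) * x q + (1 - ε p q) * x p) := by
    intro x
    simp only [hℓdef, ContinuousLinearMap.sum_apply, ContinuousLinearMap.smul_apply,
      ContinuousLinearMap.add_apply, projR, ContinuousLinearMap.proj_apply, smul_eq_mul]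
  have h1 : ∀ᶠ x in 𝓝 v, ∀ p q : Fin N, p ≠ q → 0 < (x q - x p) * (v q - v p) := by
    rw [eventually_all]; intro p
    rw [eventually_all]; intro q
    by_cases hpq : p = q
    · filter_upwards with x h; exact absurd hpq h
    · have hg : Continuous fun x : Fin N → ℝ => (x q - x p) * (v q - v p) :=
        ((continuous_apply q).sub (continuous_apply p)).mul continuous_const
      have hv0 : 0 < (v q - v p) * (v q - v p) :=
        mul_self_pos.2 (sub_ne_zero_of_ne (hdist q p (Ne.symm hpq)))
      have hmem : {x : Fin N → ℝ | 0 < (x q - x p) * (v q - v p)} ∈ 𝓝 v :=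
        (isOpen_lt continuous_const hg).mem_nhds hv0
      filter_upwards [hmem] with x hx _
      exact hx
  have h2 : ∀ᶠ x in 𝓝 v, ∀ p q : Fin N, 0 < x q + x p := by
    rw [eventually_all]; intro p
    rw [eventually_all]; intro q
    have hg : Continuous fun x : Fin N → ℝ => x q + x p :=
      (continuous_apply q).add (continuous_apply p)
    have hv0 : (0 : ℝ) < v q + v p := add_pos (hv q).1 (hv p).1
    have hmem : {x : Fin N → ℝ | 0 < x q + x p} ∈ 𝓝 v :=
      (isOpen_lt continuous_const hg).mem_nhds hv0
    filter_upwards [hmem] with x hx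
    exact hx
  have hEf : energy a 1 W =ᶠ[𝓝 v] fun x => (∑ k, d k * x k ^ 2) + ℓ x := by
    filter_upwards [h1, h2] with x hx1 hx2
    have habs1 : ∀ p q : Fin N, |x q - x p| = ε p q * (x q - x p) := by
      intro p q
      rcases eq_or_ne p q with rfl | hpq
      · simp
      · have hvne : v q - v p ≠ 0 := sub_ne_zero_of_ne (hdist q p (Ne.symm hpq))
        rcases hvne.lt_or_gt with h | h
        · have hxn : x q - x p < 0 := by nlinarith [hx1 p q hpq]
          rw [hεdef]
          simp only [Real.sign_of_neg h]
          rw [abs_of_neg hxn]; ring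
        · have hxp : 0 < x q - x p := by nlinarith [hx1 p q hpq]
          rw [hεdef]
          simp only [Real.sign_of_pos h]
          rw [abs_of_pos hxp]; ring
    have habs2 : ∀ p q : Fin N, |x q + x p| = x q + x p := fun p q => abs_of_pos (hx2 p q)
    have hε2 : ∀ p q : Fin N,
        (ε p q * (x q - x p)) ^ 2 = (x q - x p) ^ 2 := by
      intro p q
      rcases eq_or_ne p q with rfl | hpq
      · simp
      · have hvne : v q - v p ≠ 0 := sub_ne_zero_of_ne (hdist q p (Ne.symm hpq))
        rcases hvne.lt_or_gt with h | h
        · rw [hεdef]; simp only [Real.sign_of_neg h]; ring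
        · rw [hεdef]; simp only [Real.sign_of_pos h]; ring
    have key : ∀ p q : Fin N,
        (1/2 : ℝ) * (W p q * (psi a 1 (x q - x p) + psi a 1 (x q + x p)))
          = (a * W p q * (x p ^ 2 + x q ^ 2))
            + (-(a * W p q) * ((ε p q + 1) * x q + (1 - ε p q) * x p)) := by
      intro p q
      have e1 : psi a 1 (x q - x p)
          = a * ((x q - x p) ^ 2 - 2 * (ε p q * (x q - x p))) := by
        simp only [psi, mul_one]
        rw [habs1 p q]
        linear_combination a * hε2 p q
      have e2 : psi a 1 (x q + x p)
          = a * ((x q + x p) ^ 2 - 2 * (x q + x p)) := by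
        simp only [psi, mul_one]
        rw [habs2 p q]; ring
      rw [e1, e2]; ring
    have hsum : energy a 1 W x
        = ∑ p, ∑ q, ((a * W p q * (x p ^ 2 + x q ^ 2))
            + (-(a * W p q) * ((ε p q + 1) * x q + (1 - ε p q) * x p))) := by
      rw [energy, Finset.mul_sum]
      refine Finset.sum_congr rfl fun p _ => ?_
      rw [Finset.mul_sum]
      exact Finset.sum_congr rfl fun q _ => key p q
    rw [hsum]
    simp only [Finset.sum_add_distrib]
    congr 1
    · have hsplit : ∀ p : Fin N, ∑ q, a * W p q * (x p ^ 2 + x q ^ 2)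
          = (∑ q, a * W p q * x p ^ 2) + ∑ q, a * W p q * x q ^ 2 := by
        intro p
        rw [← Finset.sum_add_distrib]
        exact Finset.sum_congr rfl fun q _ => by ring
      rw [Finset.sum_congr rfl fun p _ => hsplit p, Finset.sum_add_distrib]
      rw [Finset.sum_comm (f := fun p q => a * W p q * x q ^ 2)]
      rw [← Finset.sum_add_distrib]
      refine Finset.sum_congr rfl fun k _ => ?_
      have e1 : ∑ q, a * W k q * x k ^ 2 = (∑ q, W k q) * (a * x k ^ 2) := by
        rw [Finset.sum_mul]
        exact Finset.sum_congr rfl fun q _ => by ring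
      have e2 : ∑ p, a * W p k * x k ^ 2 = (∑ p, W p k) * (a * x k ^ 2) := by
        rw [Finset.sum_mul]
        exact Finset.sum_congr rfl fun p _ => by ring
      rw [e1, e2]
      simp only [hddef]
      ring
    · exact (hℓx x).symm
  have hH : ∀ i j, hessianE a 1 W v i j = if i = j then 2 * d i else 0 := by
    intro i j
    have hstep : hessianE a 1 W v i j
        = iteratedFDeriv ℝ 2 (fun x => (∑ k, d k * x k ^ 2) + ℓ x) v
            ![Pi.single i 1, Pi.single j 1] := by
      show iteratedFDeriv ℝ 2 (energy a 1 W) v _ = _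
      rw [iteratedFDeriv_two_apply, iteratedFDeriv_two_apply, hEf.fderiv.fderiv_eq]
    rw [hstep, hess_f]
    rcases eq_or_ne i j with rfl | hij
    · rw [if_pos rfl, Finset.sum_eq_single i]
      · simp
      · intro k _ hk; simp [Pi.single_apply, hk]
      · intro h; exact absurd (Finset.mem_univ i) h
    · rw [if_neg hij]
      refine Finset.sum_eq_zero fun k _ => ?_
      rcases eq_or_ne k i with rfl | hki
      · simp [Pi.single_apply, Ne.symm hij]
      · simp [Pi.single_apply, hki]
  have hd : ∀ i, 0 < d i := by
    intro i
    rw [hddef]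
    have hs1 : W i i ≤ ∑ q, W i q :=
      Finset.single_le_sum (fun q _ => hW i q) (Finset.mem_univ i)
    have hs2 : W i i ≤ ∑ p, W p i :=
      Finset.single_le_sum (fun p _ => hW p i) (Finset.mem_univ i)
    have hWii := hdiag i
    have : (0 : ℝ) < (∑ q, W i q) + ∑ p, W p i := by linarith
    exact mul_pos ha this
  rw [Matrix.posDef_iff_dotProduct_mulVec]
  constructor
  · rw [Matrix.IsHermitian]
    ext i j
    simp only [Matrix.conjTranspose_apply, star_trivial, hH i j, hH j i]
    rcases eq_or_ne i j with rfl | hij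
    · simp
    · rw [if_neg hij, if_neg (Ne.symm hij)]
  · intro x hx
    have hmv : ∀ i, (hessianE a 1 W v).mulVec x i = 2 * d i * x i := by
      intro i
      rw [Matrix.mulVec]
      show ∑ j, hessianE a 1 W v i j * x j = _
      rw [Finset.sum_eq_single i]
      · rw [hH i i, if_pos rfl]
      · intro j _ hj; rw [hH i j, if_neg (Ne.symm hj), zero_mul]
      · intro h; exact absurd (Finset.mem_univ i) h
    have hdot : dotProduct (star x) ((hessianE a 1 W v).mulVec x)
        = ∑ i, 2 * d i * x i ^ 2 := by
      rw [dotProduct]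
      refine Finset.sum_congr rfl fun i _ => ?_
      rw [hmv i]
      simp only [Pi.star_apply, star_trivial]
      ring
    rw [hdot]
    obtain ⟨i0, hi0⟩ := Function.ne_iff.1 hx
    refine Finset.sum_pos'
      (fun i _ => mul_nonneg (mul_nonneg (by norm_num) (hd i).le) (sq_nonneg _))
      ⟨i0, Finset.mem_univ i0, ?_⟩
    have hx2 : 0 < x i0 ^ 2 := lt_of_le_of_ne (sq_nonneg _) (Ne.symm (pow_ne_zero 2 hi0))
    exact mul_pos (mul_pos (by norm_num) (hd i0)) hx2
end

section
/- Let a > 0, n a positive integer, and W̃ an N×N matrix with nonnegative entries and positive diagonal entries. Then at every point v ∈ (0,1)^N whose entries are pairwise distinct, the Hessian matrix of the energy E(·,W̃) is positive semidefinite. -/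
/-! ### Auxiliary machinery -/

lemma aux_hasDerivAt (c : ℝ) (m : ℕ) (t : ℝ) :
    HasDerivAt (fun s : ℝ => c * ((s - 1) ^ m - 1)) (c * (↑m * (t - 1) ^ (m - 1))) t := by
  have h1 : HasDerivAt (fun s : ℝ => (s - 1) ^ m) (↑m * (t - 1) ^ (m - 1) * 1) t :=
    ((hasDerivAt_id t).sub_const 1).pow m
  simpa using (h1.sub_const 1).const_mul c

lemma aux_hasDerivAt' (c : ℝ) (m : ℕ) (t : ℝ) :
    HasDerivAt (fun s : ℝ => c * (↑m * (s - 1) ^ (m - 1)))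
      (c * (↑m * (↑(m - 1) * (t - 1) ^ (m - 1 - 1)))) t := by
  have h1 : HasDerivAt (fun s : ℝ => (s - 1) ^ (m - 1)) (↑(m - 1) * (t - 1) ^ (m - 1 - 1) * 1) t :=
    ((hasDerivAt_id t).sub_const 1).pow (m - 1)
  simpa [mul_assoc] using (h1.const_mul (m : ℝ)).const_mul c

lemma term_hasFDerivAt {N : ℕ} (c : ℝ) (m : ℕ) (L : (Fin N → ℝ) →L[ℝ] ℝ) (u : Fin N → ℝ) :
    HasFDerivAt (fun x => c * ((L x - 1) ^ m - 1)) ((c * (↑m * (L u - 1) ^ (m - 1))) • L) u :=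
  (aux_hasDerivAt c m (L u)).comp_hasFDerivAt u L.hasFDerivAt

lemma term2_hasFDerivAt {N : ℕ} (c : ℝ) (m : ℕ) (L : (Fin N → ℝ) →L[ℝ] ℝ) (v : Fin N → ℝ) :
    HasFDerivAt (fun u => (c * (↑m * (L u - 1) ^ (m - 1))) • L)
      (((c * (↑m * (↑(m - 1) * (L v - 1) ^ (m - 1 - 1)))) • L).smulRight L) v :=
  ((aux_hasDerivAt' c m (L v)).comp_hasFDerivAt v L.hasFDerivAt).smul_const L

/-- The sign of `v q - v p`. -/
noncomputable def eps {N : ℕ} (v : Fin N → ℝ) (p q : Fin N) : ℝ :=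
  if v q - v p < 0 then -1 else 1

noncomputable def LL1 {N : ℕ} (v : Fin N → ℝ) (p q : Fin N) : (Fin N → ℝ) →L[ℝ] ℝ :=
  eps v p q • ((ContinuousLinearMap.proj q : (Fin N → ℝ) →L[ℝ] ℝ) - ContinuousLinearMap.proj p)

noncomputable def LL2 {N : ℕ} (p q : Fin N) : (Fin N → ℝ) →L[ℝ] ℝ :=
  (ContinuousLinearMap.proj q : (Fin N → ℝ) →L[ℝ] ℝ) + ContinuousLinearMap.proj p

lemma LL1_apply {N : ℕ} (v : Fin N → ℝ) (p q : Fin N) (u : Fin N → ℝ) :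
    LL1 v p q u = eps v p q * (u q - u p) := by
  simp [LL1]

lemma LL2_apply {N : ℕ} (p q : Fin N) (u : Fin N → ℝ) : LL2 p q u = u q + u p := by
  simp [LL2]

/-- The local smooth model for the energy. -/
noncomputable def FF {N : ℕ} (a : ℝ) (n : ℕ) (W : Matrix (Fin N) (Fin N) ℝ)
    (v : Fin N → ℝ) : (Fin N → ℝ) → ℝ := fun u =>
  (1 / 2) * ∑ p, ∑ q, (W p q * a * ((LL1 v p q u - 1) ^ (2 * n) - 1)
    + W p q * a * ((LL2 p q u - 1) ^ (2 * n) - 1))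

noncomputable def DFF {N : ℕ} (a : ℝ) (n : ℕ) (W : Matrix (Fin N) (Fin N) ℝ)
    (v : Fin N → ℝ) (u : Fin N → ℝ) : (Fin N → ℝ) →L[ℝ] ℝ :=
  (1 / 2 : ℝ) • ∑ p, ∑ q,
    ((W p q * a * (↑(2 * n) * (LL1 v p q u - 1) ^ (2 * n - 1))) • LL1 v p q
      + (W p q * a * (↑(2 * n) * (LL2 p q u - 1) ^ (2 * n - 1))) • LL2 p q)

noncomputable def DDFF {N : ℕ} (a : ℝ) (n : ℕ) (W : Matrix (Fin N) (Fin N) ℝ)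
    (v : Fin N → ℝ) : (Fin N → ℝ) →L[ℝ] ((Fin N → ℝ) →L[ℝ] ℝ) :=
  (1 / 2 : ℝ) • ∑ p, ∑ q,
    (((W p q * a * (↑(2 * n) * (↑(2 * n - 1) * (LL1 v p q v - 1) ^ (2 * n - 1 - 1)))) •
        LL1 v p q).smulRight (LL1 v p q)
      + ((W p q * a * (↑(2 * n) * (↑(2 * n - 1) * (LL2 p q v - 1) ^ (2 * n - 1 - 1)))) •
        LL2 p q).smulRight (LL2 p q))

lemma hasFDerivAt_FF {N : ℕ} (a : ℝ) (n : ℕ) (W : Matrix (Fin N) (Fin N) ℝ)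
    (v : Fin N → ℝ) (u : Fin N → ℝ) :
    HasFDerivAt (FF a n W v) (DFF a n W v u) u := by
  unfold FF DFF
  exact HasFDerivAt.const_mul
    (HasFDerivAt.fun_sum fun p _ => HasFDerivAt.fun_sum fun q _ =>
      (term_hasFDerivAt _ (2 * n) (LL1 v p q) u).add (term_hasFDerivAt _ (2 * n) (LL2 p q) u))
    (1 / 2)

lemma hasFDerivAt_DFF {N : ℕ} (a : ℝ) (n : ℕ) (W : Matrix (Fin N) (Fin N) ℝ)
    (v : Fin N → ℝ) :
    HasFDerivAt (DFF a n W v) (DDFF a n W v) v := by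
  unfold DFF DDFF
  exact HasFDerivAt.const_smul
    (HasFDerivAt.fun_sum fun p _ => HasFDerivAt.fun_sum fun q _ =>
      (term2_hasFDerivAt _ (2 * n) (LL1 v p q) v).add (term2_hasFDerivAt _ (2 * n) (LL2 p q) v))
    (1 / 2 : ℝ)

lemma fderiv_fderiv_FF {N : ℕ} (a : ℝ) (n : ℕ) (W : Matrix (Fin N) (Fin N) ℝ)
    (v : Fin N → ℝ) :
    fderiv ℝ (fderiv ℝ (FF a n W v)) v = DDFF a n W v := by
  have h : fderiv ℝ (FF a n W v) = DFF a n W v :=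
    funext fun u => (hasFDerivAt_FF a n W v u).fderiv
  rw [h]
  exact (hasFDerivAt_DFF a n W v).fderiv

lemma DDFF_apply {N : ℕ} (a : ℝ) (n : ℕ) (W : Matrix (Fin N) (Fin N) ℝ)
    (v : Fin N → ℝ) (c d : Fin N → ℝ) :
    DDFF a n W v c d = (1 / 2) * ∑ p, ∑ q,
      (W p q * a * (↑(2 * n) * (↑(2 * n - 1) * (LL1 v p q v - 1) ^ (2 * n - 1 - 1)))
          * (LL1 v p q c * LL1 v p q d)
        + W p q * a * (↑(2 * n) * (↑(2 * n - 1) * (LL2 p q v - 1) ^ (2 * n - 1 - 1)))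
          * (LL2 p q c * LL2 p q d)) := by
  unfold DDFF
  simp only [ContinuousLinearMap.coe_smul', Pi.smul_apply, ContinuousLinearMap.sum_apply,
    ContinuousLinearMap.add_apply, ContinuousLinearMap.smulRight_apply,
    ContinuousLinearMap.smul_apply, smul_eq_mul, Finset.mul_sum]
  refine Finset.sum_congr rfl fun p _ => Finset.sum_congr rfl fun q _ => ?_
  ring

/-- For `a > 0`, any positive integer `n`, and a nonnegative weight matrix with
positive diagonal, the Hessian of the energy is positive semidefinite at every `v ∈ (0,1)^N`
with pairwise distinct entries. -/
theorem stmt6 (a : ℝ) (ha : 0 < a) (n : ℕ) (hn : 0 < n) (N : ℕ)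
    (W : Matrix (Fin N) (Fin N) ℝ) (hW : ∀ i j, 0 ≤ W i j) (hdiag : ∀ i, 0 < W i i)
    (v : Fin N → ℝ) (hv : ∀ i, v i ∈ Set.Ioo (0 : ℝ) 1)
    (hdist : ∀ i j, i ≠ j → v i ≠ v j) :
    (hessianE a n W v).PosSemidef := by
  classical
  set U : Set (Fin N → ℝ) :=
    {u | (∀ i, 0 < u i) ∧ ∀ p q, p ≠ q → 0 < eps v p q * (u q - u p)} with hUdef
  have hUopen : IsOpen U := by
    have hrw : U = (⋂ i, {u : Fin N → ℝ | 0 < u i}) ∩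
        ⋂ p, ⋂ q, {u : Fin N → ℝ | p ≠ q → 0 < eps v p q * (u q - u p)} := by
      ext u
      simp [hUdef, Set.mem_iInter]
    rw [hrw]
    refine IsOpen.inter
      (isOpen_iInter_of_finite fun i => isOpen_lt continuous_const (continuous_apply i))
      (isOpen_iInter_of_finite fun p => isOpen_iInter_of_finite fun q => ?_)
    by_cases hpq : p = q
    · have : {u : Fin N → ℝ | p ≠ q → 0 < eps v p q * (u q - u p)} = Set.univ := by
        ext u; simp [hpq]
      rw [this]; exact isOpen_univ
    · have : {u : Fin N → ℝ | p ≠ q → 0 < eps v p q * (u q - u p)}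
          = {u : Fin N → ℝ | 0 < eps v p q * (u q - u p)} := by
        ext u; simp [hpq]
      rw [this]
      exact isOpen_lt continuous_const
        (continuous_const.mul ((continuous_apply q).sub (continuous_apply p)))
  have hvU : v ∈ U := by
    refine ⟨fun i => (hv i).1, fun p q hpq => ?_⟩
    have hne : v q ≠ v p := hdist q p (Ne.symm hpq)
    unfold eps
    split_ifs with h
    · rw [neg_one_mul]; linarith
    · rw [one_mul]
      exact lt_of_le_of_ne (not_lt.mp h) (Ne.symm (sub_ne_zero_of_ne hne))
  have hEqOn : Set.EqOn (energy a n W) (FF a n W v) U := by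
    intro u hu
    obtain ⟨hpos, hsep⟩ := hu
    simp only [energy, FF]
    congr 1
    refine Finset.sum_congr rfl fun p _ => Finset.sum_congr rfl fun q _ => ?_
    have habs2 : |u q + u p| = LL2 p q u := by
      rw [LL2_apply]; exact abs_of_pos (add_pos (hpos q) (hpos p))
    by_cases hpq : p = q
    · subst hpq
      have h1 : LL1 v p p u = 0 := by rw [LL1_apply]; ring
      have hev : ((-1 : ℝ)) ^ (2 * n) = 1 := Even.neg_one_pow ⟨n, two_mul n⟩
      simp only [psi, h1, sub_self, abs_zero, zero_sub, habs2, hev]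
      ring
    · have h0 := hsep p q hpq
      have heps : eps v p q = 1 ∨ eps v p q = -1 := by
        unfold eps; split_ifs <;> simp
      have habs1 : |u q - u p| = LL1 v p q u := by
        rw [LL1_apply]
        rcases heps with h | h
        · rw [h, one_mul]
          rw [h, one_mul] at h0
          exact abs_of_pos h0
        · rw [h] at h0 ⊢
          rw [neg_one_mul] at h0 ⊢
          have hlt : u q - u p < 0 := by linarith
          rw [abs_of_neg hlt]
      simp only [psi, habs1, habs2]
      ring
  have hiter : iteratedFDeriv ℝ 2 (energy a n W) v = iteratedFDeriv ℝ 2 (FF a n W v) v := by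
    have hmem : U ∈ nhds v := hUopen.mem_nhds hvU
    have hfeq : energy a n W =ᶠ[nhdsWithin v Set.univ] FF a n W v := by
      rw [nhdsWithin_univ]
      exact Filter.eventuallyEq_of_mem hmem hEqOn
    rw [← iteratedFDerivWithin_univ, ← iteratedFDerivWithin_univ]
    exact hfeq.iteratedFDerivWithin_eq (hEqOn hvU) 2
  have hH : ∀ i j, hessianE a n W v i j
      = DDFF a n W v (Pi.single i 1) (Pi.single j 1) := by
    intro i j
    show iteratedFDeriv ℝ 2 (energy a n W) v ![Pi.single i 1, Pi.single j 1] = _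
    rw [hiter, iteratedFDeriv_two_apply, fderiv_fderiv_FF]
    simp
  have hκ : ∀ (p q : Fin N) (L : (Fin N → ℝ) →L[ℝ] ℝ),
      0 ≤ W p q * a * (↑(2 * n) * (↑(2 * n - 1) * (L v - 1) ^ (2 * n - 1 - 1))) := by
    intro p q L
    have he : Even (2 * n - 1 - 1) := ⟨n - 1, by omega⟩
    exact mul_nonneg (mul_nonneg (hW p q) ha.le)
      (mul_nonneg (Nat.cast_nonneg _) (mul_nonneg (Nat.cast_nonneg _) (he.pow_nonneg _)))
  rw [Matrix.posSemidef_iff_dotProduct_mulVec]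
  constructor
  · show Matrix.conjTranspose (hessianE a n W v) = hessianE a n W v
    ext i j
    rw [Matrix.conjTranspose_apply, star_trivial, hH i j, hH j i, DDFF_apply, DDFF_apply]
    congr 1
    refine Finset.sum_congr rfl fun p _ => Finset.sum_congr rfl fun q _ => ?_
    ring
  · intro x
    have hxsum : ∑ j, Pi.single j (x j) = x := Finset.univ_sum_single x
    have hsingle : ∀ j : Fin N, Pi.single j (x j) = x j • (Pi.single j (1 : ℝ) : Fin N → ℝ) := by
      intro j; funext k; by_cases h : k = j <;> simp [Pi.single_apply, h]
    have h1 : ∀ c : Fin N → ℝ,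
        ∑ j, DDFF a n W v c (Pi.single j 1) * x j = DDFF a n W v c x := by
      intro c
      conv_rhs => rw [← hxsum]
      rw [map_sum]
      refine Finset.sum_congr rfl fun j _ => ?_
      rw [hsingle j, map_smul, smul_eq_mul, mul_comm]
    have h2 : ∑ i, x i * DDFF a n W v (Pi.single i 1) x = DDFF a n W v x x := by
      have hexp : DDFF a n W v x = ∑ i, x i • DDFF a n W v (Pi.single i 1) := by
        conv_lhs => rw [← hxsum]
        rw [map_sum]
        exact Finset.sum_congr rfl fun i _ => by rw [hsingle i, map_smul]
      rw [hexp, ContinuousLinearMap.sum_apply]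
      exact Finset.sum_congr rfl fun i _ => by
        rw [ContinuousLinearMap.smul_apply, smul_eq_mul]
    have hdot : dotProduct (star x) (Matrix.mulVec (hessianE a n W v) x) = DDFF a n W v x x := by
      simp only [dotProduct, Matrix.mulVec, star_trivial]
      rw [← h2]
      refine Finset.sum_congr rfl fun i _ => ?_
      rw [← h1]
      congr 1
      refine Finset.sum_congr rfl fun j _ => ?_
      rw [hH i j]
    rw [hdot, DDFF_apply]
    refine mul_nonneg (by norm_num) (Finset.sum_nonneg fun p _ => Finset.sum_nonneg fun q _ =>
      add_nonneg (mul_nonneg (hκ p q _) (mul_self_nonneg _))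
        (mul_nonneg (hκ p q _) (mul_self_nonneg _)))
end

section
/- Let a > 0, n = 2, and W̃ an N×N matrix with nonnegative entries and positive diagonal entries. Let v ∈ (0,1)^N have pairwise distinct entries, and assume that for every index i ∈ {1,…,N} at least one of the following holds: (i) v_i ≠ 1/2, or (ii) there exists j ≠ i with v_j ≠ v_i, v_j ≠ 1 − v_i, and w̃_{ij} > 0. Then the Hessian matrix of the energy E(·,W̃) at v is positive definite. -/
open scoped BigOperators
open Topology Filter Matrix

noncomputable def Pa (a t : ℝ) : ℝ := a * ((t - 1) ^ 4 - 1)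
noncomputable def Pa' (a t : ℝ) : ℝ := a * (4 * (t - 1) ^ 3)
noncomputable def Pa'' (a t : ℝ) : ℝ := a * (12 * (t - 1) ^ 2)

lemma hasDerivAt_Pa (a t : ℝ) : HasDerivAt (Pa a) (Pa' a t) t := by
  have h : HasDerivAt (fun t : ℝ => (t - 1) ^ 4 - 1) (4 * (t - 1) ^ 3) t := by
    simpa using (((hasDerivAt_id t).sub_const 1).pow 4).sub_const 1
  exact h.const_mul a

lemma hasDerivAt_Pa' (a t : ℝ) : HasDerivAt (Pa' a) (Pa'' a t) t := by
  have h : HasDerivAt (fun t : ℝ => 4 * (t - 1) ^ 3) (12 * (t - 1) ^ 2) t := by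
    have := (((hasDerivAt_id t).sub_const 1).pow 3).const_mul 4
    refine this.congr_deriv ?_
    simp only [id]
    norm_num
    ring
  exact h.const_mul a

section
variable {N : ℕ}

noncomputable def Lm (p q : Fin N) : (Fin N → ℝ) →L[ℝ] ℝ :=
  (ContinuousLinearMap.proj q : (Fin N → ℝ) →L[ℝ] ℝ) - ContinuousLinearMap.proj p

noncomputable def Lp (p q : Fin N) : (Fin N → ℝ) →L[ℝ] ℝ :=
  (ContinuousLinearMap.proj q : (Fin N → ℝ) →L[ℝ] ℝ) + ContinuousLinearMap.proj p

@[simp] lemma Lm_apply (p q : Fin N) (u : Fin N → ℝ) : Lm p q u = u q - u p := by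
  simp [Lm]
@[simp] lemma Lp_apply (p q : Fin N) (u : Fin N → ℝ) : Lp p q u = u q + u p := by
  simp [Lp]

lemma hasFDerivAt_Lm (p q : Fin N) (u : Fin N → ℝ) :
    HasFDerivAt (fun u : Fin N → ℝ => u q - u p) (Lm p q) u :=
  ((ContinuousLinearMap.proj q : (Fin N → ℝ) →L[ℝ] ℝ).hasFDerivAt).sub
    ((ContinuousLinearMap.proj p : (Fin N → ℝ) →L[ℝ] ℝ).hasFDerivAt)

lemma hasFDerivAt_Lp (p q : Fin N) (u : Fin N → ℝ) :
    HasFDerivAt (fun u : Fin N → ℝ => u q + u p) (Lp p q) u :=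
  ((ContinuousLinearMap.proj q : (Fin N → ℝ) →L[ℝ] ℝ).hasFDerivAt).add
    ((ContinuousLinearMap.proj p : (Fin N → ℝ) →L[ℝ] ℝ).hasFDerivAt)

noncomputable def Fsm (a : ℝ) (ε : Fin N → Fin N → ℝ) (W : Matrix (Fin N) (Fin N) ℝ)
    (u : Fin N → ℝ) : ℝ :=
  (1 / 2) * ∑ p, ∑ q, W p q * (Pa a (ε p q * (u q - u p)) + Pa a (u q + u p))

noncomputable def Dsm (a : ℝ) (ε : Fin N → Fin N → ℝ) (W : Matrix (Fin N) (Fin N) ℝ)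
    (u : Fin N → ℝ) : (Fin N → ℝ) →L[ℝ] ℝ :=
  (1 / 2 : ℝ) • ∑ p, ∑ q, W p q •
    ((ε p q * Pa' a (ε p q * (u q - u p))) • Lm p q + Pa' a (u q + u p) • Lp p q)

lemma hasFDerivAt_term1 (a : ℝ) (c : ℝ) (p q : Fin N) (u : Fin N → ℝ) :
    HasFDerivAt (fun u : Fin N → ℝ => Pa a (c * (u q - u p)))
      ((c * Pa' a (c * (u q - u p))) • Lm p q) u := by
  have hlin : HasFDerivAt (fun u : Fin N → ℝ => c * (u q - u p)) (c • Lm p q) u :=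
    (hasFDerivAt_Lm p q u).const_mul c
  have := (hasDerivAt_Pa a (c * (u q - u p))).comp_hasFDerivAt u hlin
  rw [smul_smul, mul_comm] at this
  exact this

lemma hasFDerivAt_term2 (a : ℝ) (p q : Fin N) (u : Fin N → ℝ) :
    HasFDerivAt (fun u : Fin N → ℝ => Pa a (u q + u p))
      (Pa' a (u q + u p) • Lp p q) u :=
  by have := (hasDerivAt_Pa a (u q + u p)).comp_hasFDerivAt u (hasFDerivAt_Lp p q u); exact this

lemma hasFDerivAt_Fsm (a : ℝ) (ε : Fin N → Fin N → ℝ) (W : Matrix (Fin N) (Fin N) ℝ)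
    (u : Fin N → ℝ) : HasFDerivAt (Fsm a ε W) (Dsm a ε W u) u := by
  have h : ∀ p ∈ Finset.univ, ∀ q ∈ Finset.univ,
      HasFDerivAt (fun u : Fin N → ℝ => W p q * (Pa a (ε p q * (u q - u p)) + Pa a (u q + u p)))
        (W p q • ((ε p q * Pa' a (ε p q * (u q - u p))) • Lm p q + Pa' a (u q + u p) • Lp p q)) u := by
    intro p _ q _
    exact ((hasFDerivAt_term1 a (ε p q) p q u).add (hasFDerivAt_term2 a p q u)).const_mul (W p q)
  have hsum : HasFDerivAt
      (fun u : Fin N → ℝ => ∑ p, ∑ q, W p q * (Pa a (ε p q * (u q - u p)) + Pa a (u q + u p)))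
      (∑ p, ∑ q, W p q • ((ε p q * Pa' a (ε p q * (u q - u p))) • Lm p q + Pa' a (u q + u p) • Lp p q)) u := by
    exact HasFDerivAt.fun_sum fun p _ => HasFDerivAt.fun_sum fun q _ => h p (Finset.mem_univ p) q (Finset.mem_univ q)
  have := hsum.const_mul (1 / 2 : ℝ)
  have hFsm : Fsm a ε W = fun u : Fin N → ℝ =>
      (1 / 2) * ∑ p, ∑ q, W p q * (Pa a (ε p q * (u q - u p)) + Pa a (u q + u p)) := rfl
  rw [hFsm]
  simpa [Dsm, smul_smul, smul_add] using this

lemma Dsm_apply (a : ℝ) (ε : Fin N → Fin N → ℝ) (W : Matrix (Fin N) (Fin N) ℝ)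
    (u x : Fin N → ℝ) :
    Dsm a ε W u x = (1 / 2) * ∑ p, ∑ q, W p q *
      ((ε p q * Pa' a (ε p q * (u q - u p))) * (x q - x p)
        + Pa' a (u q + u p) * (x q + x p)) := by
  simp only [Dsm, ContinuousLinearMap.smul_apply, ContinuousLinearMap.sum_apply,
    ContinuousLinearMap.add_apply, Lm_apply, Lp_apply, smul_eq_mul]

lemma hasFDerivAt_Dsm_apply (a : ℝ) (ε : Fin N → Fin N → ℝ) (W : Matrix (Fin N) (Fin N) ℝ)
    (v y : Fin N → ℝ) :
    ∃ L : (Fin N → ℝ) →L[ℝ] ℝ, HasFDerivAt (fun u => Dsm a ε W u y) L v ∧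
      ∀ x, L x = (1 / 2) * ∑ p, ∑ q, W p q *
        (ε p q * ε p q * Pa'' a (ε p q * (v q - v p)) * (y q - y p) * (x q - x p)
          + Pa'' a (v q + v p) * (y q + y p) * (x q + x p)) := by
  refine ⟨(1 / 2 : ℝ) • ∑ p, ∑ q,
      ((W p q * (ε p q * ε p q * Pa'' a (ε p q * (v q - v p)) * (y q - y p))) • Lm p q
        + (W p q * (Pa'' a (v q + v p) * (y q + y p))) • Lp p q), ?_, ?_⟩
  · have hfun : (fun u => Dsm a ε W u y) = fun u : Fin N → ℝ => (1 / 2) * ∑ p, ∑ q, W p q *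
        ((ε p q * Pa' a (ε p q * (u q - u p))) * (y q - y p)
          + Pa' a (u q + u p) * (y q + y p)) := by
      funext u; exact Dsm_apply a ε W u y
    rw [hfun]
    have hterm : ∀ p q : Fin N, HasFDerivAt (fun u : Fin N → ℝ => W p q *
        ((ε p q * Pa' a (ε p q * (u q - u p))) * (y q - y p)
          + Pa' a (u q + u p) * (y q + y p)))
        ((W p q * (ε p q * ε p q * Pa'' a (ε p q * (v q - v p)) * (y q - y p))) • Lm p q
          + (W p q * (Pa'' a (v q + v p) * (y q + y p))) • Lp p q) v := by
      intro p q
      have hlin : HasFDerivAt (fun u : Fin N → ℝ => ε p q * (u q - u p)) (ε p q • Lm p q) v :=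
        (hasFDerivAt_Lm p q v).const_mul (ε p q)
      have h1 : HasFDerivAt (fun u : Fin N → ℝ => Pa' a (ε p q * (u q - u p)))
          (Pa'' a (ε p q * (v q - v p)) • (ε p q • Lm p q)) v :=
        (hasDerivAt_Pa' a _).comp_hasFDerivAt v hlin
      have h2 : HasFDerivAt (fun u : Fin N → ℝ => Pa' a (u q + u p))
          (Pa'' a (v q + v p) • Lp p q) v :=
        (hasDerivAt_Pa' a _).comp_hasFDerivAt v (hasFDerivAt_Lp p q v)
      have hA := ((h1.const_mul (ε p q)).mul_const (y q - y p))
      have hB := (h2.mul_const (y q + y p))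
      have := (hA.add hB).const_mul (W p q)
      refine this.congr_fderiv ?_
      ext z
      simp [smul_smul]
      ring
    have hsum := HasFDerivAt.fun_sum (fun p (_ : p ∈ Finset.univ) =>
      HasFDerivAt.fun_sum (fun q (_ : q ∈ Finset.univ) => hterm p q))
    have := hsum.const_mul (1 / 2 : ℝ)
    simpa using this
  · intro x
    simp only [ContinuousLinearMap.smul_apply, ContinuousLinearMap.sum_apply,
      ContinuousLinearMap.add_apply, Lm_apply, Lp_apply, smul_eq_mul]
    congr 1
    refine Finset.sum_congr rfl fun p _ => Finset.sum_congr rfl fun q _ => ?_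
    ring

lemma differentiableAt_Dsm (a : ℝ) (ε : Fin N → Fin N → ℝ) (W : Matrix (Fin N) (Fin N) ℝ)
    (v : Fin N → ℝ) : DifferentiableAt ℝ (Dsm a ε W) v := by
  have h : Dsm a ε W = fun u : Fin N → ℝ => (1 / 2 : ℝ) • ∑ p, ∑ q, W p q •
      ((ε p q * Pa' a (ε p q * (u q - u p))) • Lm p q + Pa' a (u q + u p) • Lp p q) := rfl
  rw [h]
  refine DifferentiableAt.fun_const_smul ?_ _
  refine DifferentiableAt.fun_sum fun p _ => DifferentiableAt.fun_sum fun q _ => ?_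
  refine DifferentiableAt.fun_const_smul (DifferentiableAt.add ?_ ?_) _
  · have hlin : HasFDerivAt (fun u : Fin N → ℝ => ε p q * (u q - u p)) (ε p q • Lm p q) v :=
      (hasFDerivAt_Lm p q v).const_mul (ε p q)
    have h1 : DifferentiableAt ℝ (fun u : Fin N → ℝ => ε p q * Pa' a (ε p q * (u q - u p))) v :=
      (((hasDerivAt_Pa' a _).comp_hasFDerivAt v hlin).differentiableAt).const_mul _
    exact h1.smul_const _
  · have h2 : DifferentiableAt ℝ (fun u : Fin N → ℝ => Pa' a (u q + u p)) v :=
      ((hasDerivAt_Pa' a _).comp_hasFDerivAt v (hasFDerivAt_Lp p q v)).differentiableAt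
    exact h2.smul_const _

lemma iteratedFDeriv_two_Fsm (a : ℝ) (ε : Fin N → Fin N → ℝ) (W : Matrix (Fin N) (Fin N) ℝ)
    (v x y : Fin N → ℝ) :
    iteratedFDeriv ℝ 2 (Fsm a ε W) v ![x, y] = (1 / 2) * ∑ p, ∑ q, W p q *
        (ε p q * ε p q * Pa'' a (ε p q * (v q - v p)) * (y q - y p) * (x q - x p)
          + Pa'' a (v q + v p) * (y q + y p) * (x q + x p)) := by
  obtain ⟨L, hL, hLval⟩ := hasFDerivAt_Dsm_apply a ε W v y
  have hfd : fderiv ℝ (Fsm a ε W) = Dsm a ε W :=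
    funext fun u => (hasFDerivAt_Fsm a ε W u).fderiv
  have hD := differentiableAt_Dsm a ε W v
  have hswap : (fderiv ℝ (Dsm a ε W) v x) y = fderiv ℝ (fun u => Dsm a ε W u y) v x := by
    have hA : HasFDerivAt (fun u => Dsm a ε W u y)
        ((ContinuousLinearMap.apply ℝ ℝ y).comp (fderiv ℝ (Dsm a ε W) v)) v :=
      ((ContinuousLinearMap.apply ℝ ℝ y).hasFDerivAt).comp v hD.hasFDerivAt
    rw [hA.fderiv]
    rfl
  rw [iteratedFDeriv_two_apply]
  simp only [Matrix.cons_val_zero, Matrix.cons_val_one, Matrix.head_cons]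
  rw [hfd, hswap, hL.fderiv, hLval]

lemma iter_congr {E F : Type*} [NormedAddCommGroup E] [NormedSpace ℝ E]
    [NormedAddCommGroup F] [NormedSpace ℝ F] {f g : E → F} {x : E}
    (h : f =ᶠ[𝓝 x] g) (n : ℕ) : iteratedFDeriv ℝ n f x = iteratedFDeriv ℝ n g x := by
  rw [← iteratedFDerivWithin_univ, ← iteratedFDerivWithin_univ]
  refine Filter.EventuallyEq.iteratedFDerivWithin_eq ?_ h.self_of_nhds n
  rwa [nhdsWithin_univ]

lemma swap4 (f : Fin N → Fin N → Fin N → Fin N → ℝ) :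
    ∑ i, ∑ j, ∑ p, ∑ q, f i j p q = ∑ p, ∑ q, ∑ i, ∑ j, f i j p q :=
  calc ∑ i, ∑ j, ∑ p, ∑ q, f i j p q
      = ∑ i, ∑ p, ∑ j, ∑ q, f i j p q :=
        Finset.sum_congr rfl fun i _ => Finset.sum_comm
    _ = ∑ p, ∑ i, ∑ j, ∑ q, f i j p q := Finset.sum_comm
    _ = ∑ p, ∑ i, ∑ q, ∑ j, f i j p q :=
        Finset.sum_congr rfl fun p _ => Finset.sum_congr rfl fun i _ => Finset.sum_comm
    _ = ∑ p, ∑ q, ∑ i, ∑ j, f i j p q :=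
        Finset.sum_congr rfl fun p _ => Finset.sum_comm

lemma sum_single_mul (x : Fin N → ℝ) (r : Fin N) :
    (∑ i, x i * (Pi.single i (1:ℝ) : Fin N → ℝ) r) = x r := by
  simp [Pi.single_apply, mul_ite]

lemma bilin_sum (x : Fin N → ℝ) (c1 c2 : ℝ) (p q : Fin N) :
    (∑ i, ∑ j, x i * x j *
      (c1 * ((Pi.single j (1:ℝ) : Fin N → ℝ) q - (Pi.single j (1:ℝ) : Fin N → ℝ) p) * ((Pi.single i (1:ℝ) : Fin N → ℝ) q - (Pi.single i (1:ℝ) : Fin N → ℝ) p)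
        + c2 * ((Pi.single j (1:ℝ) : Fin N → ℝ) q + (Pi.single j (1:ℝ) : Fin N → ℝ) p) * ((Pi.single i (1:ℝ) : Fin N → ℝ) q + (Pi.single i (1:ℝ) : Fin N → ℝ) p)))
    = c1 * (x q - x p) ^ 2 + c2 * (x q + x p) ^ 2 := by
  have hf : (∑ i, x i * ((Pi.single i (1:ℝ) : Fin N → ℝ) q - (Pi.single i (1:ℝ) : Fin N → ℝ) p)) = x q - x p := by
    simp only [mul_sub]
    rw [Finset.sum_sub_distrib, sum_single_mul, sum_single_mul]
  have hg : (∑ i, x i * ((Pi.single i (1:ℝ) : Fin N → ℝ) q + (Pi.single i (1:ℝ) : Fin N → ℝ) p)) = x q + x p := by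
    simp only [mul_add]
    rw [Finset.sum_add_distrib, sum_single_mul, sum_single_mul]
  calc (∑ i, ∑ j, x i * x j *
      (c1 * ((Pi.single j (1:ℝ) : Fin N → ℝ) q - (Pi.single j (1:ℝ) : Fin N → ℝ) p) * ((Pi.single i (1:ℝ) : Fin N → ℝ) q - (Pi.single i (1:ℝ) : Fin N → ℝ) p)
        + c2 * ((Pi.single j (1:ℝ) : Fin N → ℝ) q + (Pi.single j (1:ℝ) : Fin N → ℝ) p) * ((Pi.single i (1:ℝ) : Fin N → ℝ) q + (Pi.single i (1:ℝ) : Fin N → ℝ) p)))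
      = ∑ i, ∑ j, (c1 * ((x i * ((Pi.single i (1:ℝ) : Fin N → ℝ) q - (Pi.single i (1:ℝ) : Fin N → ℝ) p))
            * (x j * ((Pi.single j (1:ℝ) : Fin N → ℝ) q - (Pi.single j (1:ℝ) : Fin N → ℝ) p)))
          + c2 * ((x i * ((Pi.single i (1:ℝ) : Fin N → ℝ) q + (Pi.single i (1:ℝ) : Fin N → ℝ) p))
            * (x j * ((Pi.single j (1:ℝ) : Fin N → ℝ) q + (Pi.single j (1:ℝ) : Fin N → ℝ) p)))) := by
        refine Finset.sum_congr rfl fun i _ => Finset.sum_congr rfl fun j _ => ?_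
        ring
    _ = ∑ i, (c1 * ((x i * ((Pi.single i (1:ℝ) : Fin N → ℝ) q - (Pi.single i (1:ℝ) : Fin N → ℝ) p)) * (x q - x p))
          + c2 * ((x i * ((Pi.single i (1:ℝ) : Fin N → ℝ) q + (Pi.single i (1:ℝ) : Fin N → ℝ) p)) * (x q + x p))) := by
        refine Finset.sum_congr rfl fun i _ => ?_
        rw [Finset.sum_add_distrib, ← Finset.mul_sum, ← Finset.mul_sum,
          ← Finset.mul_sum, ← Finset.mul_sum, hf, hg]
    _ = c1 * ((x q - x p) * (x q - x p)) + c2 * ((x q + x p) * (x q + x p)) := by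
        rw [Finset.sum_add_distrib, ← Finset.mul_sum, ← Finset.mul_sum,
          ← Finset.sum_mul, ← Finset.sum_mul, hf, hg]
    _ = c1 * (x q - x p) ^ 2 + c2 * (x q + x p) ^ 2 := by ring

end

/-- For `a > 0`, `n = 2`, a nonnegative weight matrix with positive diagonal,
and `v ∈ (0,1)^N` with pairwise distinct entries such that for every `i` either `v i ≠ 1/2` or
there is `j ≠ i` with `v j ≠ v i`, `v j ≠ 1 − v i` and `W i j > 0`, the Hessian of the energy
at `v` is positive definite. -/
theorem stmt7 (a : ℝ) (ha : 0 < a) (N : ℕ)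
    (W : Matrix (Fin N) (Fin N) ℝ) (hW : ∀ i j, 0 ≤ W i j) (hdiag : ∀ i, 0 < W i i)
    (v : Fin N → ℝ) (hv : ∀ i, v i ∈ Set.Ioo (0 : ℝ) 1)
    (hdist : ∀ i j, i ≠ j → v i ≠ v j)
    (hcond : ∀ i, v i ≠ 1 / 2 ∨
      ∃ j, j ≠ i ∧ v j ≠ v i ∧ v j ≠ 1 - v i ∧ 0 < W i j) :
    (hessianE a 2 W v).PosDef := by
  classical
  set ε : Fin N → Fin N → ℝ := fun p q => if v p < v q then 1 else -1 with hεdef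
  have hεpm : ∀ p q, ε p q = 1 ∨ ε p q = -1 := fun p q => by
    by_cases h : v p < v q <;> simp [hεdef, h]
  have hεsq : ∀ p q, ε p q * ε p q = 1 := fun p q => by
    rcases hεpm p q with h | h <;> rw [h] <;> norm_num
  have hεabs : ∀ p q, ε p q * (v q - v p) = |v q - v p| := by
    intro p q
    by_cases h : v p < v q
    · rw [show ε p q = 1 by simp [hεdef, h], one_mul,
        abs_of_nonneg (sub_nonneg.2 h.le)]
    · rw [show ε p q = -1 by simp [hεdef, h],
        abs_of_nonpos (sub_nonpos.2 (not_lt.1 h))]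
      ring
  -- the energy agrees with the smooth model near `v`
  have hmem : ∀ᶠ u in 𝓝 v, ∀ p, ∀ q,
      0 ≤ ε p q * (u q - u p) ∧ 0 ≤ u q + u p := by
    rw [Filter.eventually_all]
    intro p
    rw [Filter.eventually_all]
    intro q
    refine Filter.Eventually.and ?_ ?_
    · by_cases hpq : p = q
      · subst hpq
        exact Filter.Eventually.of_forall fun u => by simp
      · have hc : ContinuousAt (fun u : Fin N → ℝ => ε p q * (u q - u p)) v :=
          (continuous_const.mul ((continuous_apply q).sub (continuous_apply p))).continuousAt
        have hpos : 0 < ε p q * (v q - v p) := by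
          rw [hεabs p q]
          exact abs_pos.2 (sub_ne_zero.2 (hdist q p fun h => hpq h.symm))
        exact (hc.eventually (eventually_gt_nhds hpos)).mono fun u h => h.le
    · have hc : ContinuousAt (fun u : Fin N → ℝ => u q + u p) v :=
        ((continuous_apply q).add (continuous_apply p)).continuousAt
      have hpos : 0 < v q + v p := add_pos (hv q).1 (hv p).1
      exact (hc.eventually (eventually_gt_nhds hpos)).mono fun u h => h.le
  have heq : energy a 2 W =ᶠ[𝓝 v] Fsm a ε W := by
    refine hmem.mono fun u hu => ?_
    simp only [energy, Fsm, psi, Pa]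
    congr 1
    refine Finset.sum_congr rfl fun p _ => Finset.sum_congr rfl fun q _ => ?_
    have h1 : |u q - u p| = ε p q * (u q - u p) := by
      have h0 := (hu p q).1
      rcases hεpm p q with h | h
      · rw [h] at h0 ⊢
        rw [one_mul] at h0 ⊢
        exact abs_of_nonneg h0
      · rw [h] at h0 ⊢
        rw [abs_of_nonpos (by linarith)]
        ring
    have h2 : |u q + u p| = u q + u p := abs_of_nonneg (hu p q).2
    rw [h1, h2]
  have key : ∀ x y : Fin N → ℝ, iteratedFDeriv ℝ 2 (energy a 2 W) v ![x, y]
      = (1 / 2) * ∑ p, ∑ q, W p q *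
        (Pa'' a (ε p q * (v q - v p)) * (y q - y p) * (x q - x p)
          + Pa'' a (v q + v p) * (y q + y p) * (x q + x p)) := by
    intro x y
    rw [iter_congr heq 2, iteratedFDeriv_two_Fsm]
    congr 1
    refine Finset.sum_congr rfl fun p _ => Finset.sum_congr rfl fun q _ => ?_
    rw [hεsq p q]
    ring
  have hnn : ∀ t, 0 ≤ Pa'' a t := by
    intro t
    have : (0:ℝ) ≤ 12 * (t - 1) ^ 2 := by positivity
    simpa [Pa''] using mul_nonneg ha.le this
  refine Matrix.PosDef.of_dotProduct_mulVec_pos ?_ ?_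
  · show (hessianE a 2 W v).conjTranspose = hessianE a 2 W v
    ext i j
    rw [Matrix.conjTranspose_apply, star_trivial]
    show hessianE a 2 W v j i = hessianE a 2 W v i j
    unfold hessianE
    rw [key, key]
    congr 1
    refine Finset.sum_congr rfl fun p _ => Finset.sum_congr rfl fun q _ => ?_
    ring
  · intro x hx
    have hqf : star x ⬝ᵥ (hessianE a 2 W v) *ᵥ x
        = (1 / 2) * ∑ p, ∑ q, W p q *
          (Pa'' a (ε p q * (v q - v p)) * (x q - x p) ^ 2
            + Pa'' a (v q + v p) * (x q + x p) ^ 2) := by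
      have hH : ∀ i j, hessianE a 2 W v i j
          = (1 / 2) * ∑ p, ∑ q, W p q *
            (Pa'' a (ε p q * (v q - v p)) * ((Pi.single j (1:ℝ) : Fin N → ℝ) q - (Pi.single j (1:ℝ) : Fin N → ℝ) p)
                * ((Pi.single i (1:ℝ) : Fin N → ℝ) q - (Pi.single i (1:ℝ) : Fin N → ℝ) p)
              + Pa'' a (v q + v p) * ((Pi.single j (1:ℝ) : Fin N → ℝ) q + (Pi.single j (1:ℝ) : Fin N → ℝ) p)
                * ((Pi.single i (1:ℝ) : Fin N → ℝ) q + (Pi.single i (1:ℝ) : Fin N → ℝ) p)) :=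
        fun i j => key _ _
      calc star x ⬝ᵥ (hessianE a 2 W v) *ᵥ x
          = ∑ i, x i * ∑ j, hessianE a 2 W v i j * x j := by
            simp [dotProduct, Matrix.mulVec]
        _ = ∑ i, ∑ j, x i * x j * hessianE a 2 W v i j := by
            refine Finset.sum_congr rfl fun i _ => ?_
            rw [Finset.mul_sum]
            exact Finset.sum_congr rfl fun j _ => by ring
        _ = ∑ i, ∑ j, ∑ p, ∑ q, x i * x j * ((1 / 2) * (W p q *
            (Pa'' a (ε p q * (v q - v p)) * ((Pi.single j (1:ℝ) : Fin N → ℝ) q - (Pi.single j (1:ℝ) : Fin N → ℝ) p)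
                * ((Pi.single i (1:ℝ) : Fin N → ℝ) q - (Pi.single i (1:ℝ) : Fin N → ℝ) p)
              + Pa'' a (v q + v p) * ((Pi.single j (1:ℝ) : Fin N → ℝ) q + (Pi.single j (1:ℝ) : Fin N → ℝ) p)
                * ((Pi.single i (1:ℝ) : Fin N → ℝ) q + (Pi.single i (1:ℝ) : Fin N → ℝ) p)))) := by
            refine Finset.sum_congr rfl fun i _ => Finset.sum_congr rfl fun j _ => ?_
            rw [hH i j]
            simp only [Finset.mul_sum]
        _ = ∑ p, ∑ q, ∑ i, ∑ j, x i * x j * ((1 / 2) * (W p q *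
            (Pa'' a (ε p q * (v q - v p)) * ((Pi.single j (1:ℝ) : Fin N → ℝ) q - (Pi.single j (1:ℝ) : Fin N → ℝ) p)
                * ((Pi.single i (1:ℝ) : Fin N → ℝ) q - (Pi.single i (1:ℝ) : Fin N → ℝ) p)
              + Pa'' a (v q + v p) * ((Pi.single j (1:ℝ) : Fin N → ℝ) q + (Pi.single j (1:ℝ) : Fin N → ℝ) p)
                * ((Pi.single i (1:ℝ) : Fin N → ℝ) q + (Pi.single i (1:ℝ) : Fin N → ℝ) p)))) := swap4 _
        _ = ∑ p, ∑ q, ((1 / 2) * (W p q * Pa'' a (ε p q * (v q - v p))) * (x q - x p) ^ 2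
              + (1 / 2) * (W p q * Pa'' a (v q + v p)) * (x q + x p) ^ 2) := by
            refine Finset.sum_congr rfl fun p _ => Finset.sum_congr rfl fun q _ => ?_
            rw [show (∑ i, ∑ j, x i * x j * ((1 / 2) * (W p q *
              (Pa'' a (ε p q * (v q - v p)) * ((Pi.single j (1:ℝ) : Fin N → ℝ) q - (Pi.single j (1:ℝ) : Fin N → ℝ) p)
                  * ((Pi.single i (1:ℝ) : Fin N → ℝ) q - (Pi.single i (1:ℝ) : Fin N → ℝ) p)
                + Pa'' a (v q + v p) * ((Pi.single j (1:ℝ) : Fin N → ℝ) q + (Pi.single j (1:ℝ) : Fin N → ℝ) p)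
                  * ((Pi.single i (1:ℝ) : Fin N → ℝ) q + (Pi.single i (1:ℝ) : Fin N → ℝ) p)))))
              = ∑ i, ∑ j, x i * x j *
                ((1 / 2) * (W p q * Pa'' a (ε p q * (v q - v p))) * ((Pi.single j (1:ℝ) : Fin N → ℝ) q - (Pi.single j (1:ℝ) : Fin N → ℝ) p)
                    * ((Pi.single i (1:ℝ) : Fin N → ℝ) q - (Pi.single i (1:ℝ) : Fin N → ℝ) p)
                  + (1 / 2) * (W p q * Pa'' a (v q + v p)) * ((Pi.single j (1:ℝ) : Fin N → ℝ) q + (Pi.single j (1:ℝ) : Fin N → ℝ) p)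
                    * ((Pi.single i (1:ℝ) : Fin N → ℝ) q + (Pi.single i (1:ℝ) : Fin N → ℝ) p)) from
              Finset.sum_congr rfl fun i _ => Finset.sum_congr rfl fun j _ => by ring]
            exact bilin_sum x _ _ p q
        _ = (1 / 2) * ∑ p, ∑ q, W p q *
            (Pa'' a (ε p q * (v q - v p)) * (x q - x p) ^ 2
              + Pa'' a (v q + v p) * (x q + x p) ^ 2) := by
            rw [Finset.mul_sum]
            refine Finset.sum_congr rfl fun p _ => ?_
            rw [Finset.mul_sum]
            exact Finset.sum_congr rfl fun q _ => by ring
    rw [hqf]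
    -- positivity
    have hterm_nn : ∀ p q : Fin N, 0 ≤ W p q *
        (Pa'' a (ε p q * (v q - v p)) * (x q - x p) ^ 2
          + Pa'' a (v q + v p) * (x q + x p) ^ 2) := by
      intro p q
      refine mul_nonneg (hW p q) (add_nonneg ?_ ?_)
      · exact mul_nonneg (hnn _) (sq_nonneg _)
      · exact mul_nonneg (hnn _) (sq_nonneg _)
    obtain ⟨i, hi⟩ := Function.ne_iff.1 hx
    have hi' : x i ≠ 0 := by simpa using hi
    have hmain : 0 < ∑ p, ∑ q, W p q *
        (Pa'' a (ε p q * (v q - v p)) * (x q - x p) ^ 2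
          + Pa'' a (v q + v p) * (x q + x p) ^ 2) := by
      refine Finset.sum_pos' (fun p _ => Finset.sum_nonneg fun q _ => hterm_nn p q)
        ⟨i, Finset.mem_univ i, ?_⟩
      rcases hcond i with hhalf | ⟨j, hji, hvj, hvj2, hWij⟩
      · refine Finset.sum_pos' (fun q _ => hterm_nn i q) ⟨i, Finset.mem_univ i, ?_⟩
        have hB : 0 < Pa'' a (v i + v i) := by
          have h1 : v i + v i - 1 ≠ 0 := by
            intro h; apply hhalf; linarith
          have : (0:ℝ) < 12 * (v i + v i - 1) ^ 2 := by positivity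
          simpa [Pa''] using mul_pos ha this
        have hA : (0:ℝ) ≤ Pa'' a (ε i i * (v i - v i)) * (x i - x i) ^ 2 :=
          mul_nonneg (hnn _) (sq_nonneg _)
        have hx2 : (0:ℝ) < (x i + x i) ^ 2 :=
          sq_pos_of_ne_zero (by intro h; apply hi'; linarith)
        refine mul_pos (hdiag i) ?_
        nlinarith [mul_pos hB hx2, hA]
      · refine Finset.sum_pos' (fun q _ => hterm_nn i q) ⟨j, Finset.mem_univ j, ?_⟩
        have hd1 : |v j - v i| < 1 := by
          rw [abs_lt]
          constructor <;> [linarith [(hv j).1, (hv i).2]; linarith [(hv j).2, (hv i).1]]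
        have hA : 0 < Pa'' a (ε i j * (v j - v i)) := by
          rw [hεabs i j]
          have h1 : |v j - v i| - 1 ≠ 0 := by
            intro h
            have : |v j - v i| = 1 := by linarith
            linarith [hd1, this.ge]
          have : (0:ℝ) < 12 * (|v j - v i| - 1) ^ 2 := by positivity
          simpa [Pa''] using mul_pos ha this
        have hB : 0 < Pa'' a (v j + v i) := by
          have h1 : v j + v i - 1 ≠ 0 := by
            intro h; apply hvj2; linarith
          have : (0:ℝ) < 12 * (v j + v i - 1) ^ 2 := by positivity
          simpa [Pa''] using mul_pos ha this
        have hsq : 0 < (x j - x i) ^ 2 + (x j + x i) ^ 2 := by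
          rcases eq_or_ne (x j - x i) 0 with h | h
          · have h3 : x j + x i ≠ 0 := by
              intro h2
              apply hi'
              have := sub_eq_zero.1 h
              linarith
            have := sq_pos_of_ne_zero h3
            nlinarith [sq_nonneg (x j - x i)]
          · have := sq_pos_of_ne_zero h
            nlinarith [sq_nonneg (x j + x i)]
        refine mul_pos hWij ?_
        nlinarith [mul_nonneg hA.le (sq_nonneg (x j - x i)),
          mul_nonneg hB.le (sq_nonneg (x j + x i)),
          mul_pos hA (mul_pos hB hsq)]
    positivity
end

section
/- Let a > 0 and n be a positive integer, and let W̃ be an N×N matrix with all entries positive and with identical rows, i.e. w̃_{j,k} = w̃_{i,k} > 0 for all 1 ≤ i, j, k ≤ N. Let v : [0,∞) → (0,1)^N be a solution of the gradient flow ∂_t v = −∇_v E(v,W̃) whose initial positions v_1(0), …, v_N(0) are pairwise distinct. Then for all t ≥ 0 the positions v_1(t), …, v_N(t) remain pairwise distinct; in particular the initial rank-order of the positions is preserved for all times. -/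
open scoped Classical
open Filter Set

lemma flux_of_nonneg (a : ℝ) (n : ℕ) {s : ℝ} (hs : 0 ≤ s) :
    flux a n s = a * n * (s - 1) ^ (2 * n - 1) := if_pos hs

lemma flux_of_neg (a : ℝ) (n : ℕ) {s : ℝ} (hs : s < 0) :
    flux a n s = a * n * (s + 1) ^ (2 * n - 1) := if_neg (not_le.mpr hs)

lemma abs_pow_sub_pow_le' (u w : ℝ) (m : ℕ) (hu : |u| ≤ 1) (hw : |w| ≤ 1) :
    |u ^ m - w ^ m| ≤ m * |u - w| := by
  rw [← geom_sum₂_mul, abs_mul]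
  have h : |∑ i ∈ Finset.range m, u ^ i * w ^ (m - 1 - i)| ≤ m := by
    calc |∑ i ∈ Finset.range m, u ^ i * w ^ (m - 1 - i)|
        ≤ ∑ i ∈ Finset.range m, |u ^ i * w ^ (m - 1 - i)| :=
          Finset.abs_sum_le_sum_abs _ _
      _ ≤ ∑ _i ∈ Finset.range m, (1 : ℝ) := by
          refine Finset.sum_le_sum fun i _ => ?_
          rw [abs_mul, abs_pow, abs_pow]
          have h1 : |u| ^ i ≤ 1 := pow_le_one₀ (abs_nonneg u) hu
          have h2 : |w| ^ (m - 1 - i) ≤ 1 := pow_le_one₀ (abs_nonneg w) hw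
          nlinarith [pow_nonneg (abs_nonneg u) i, pow_nonneg (abs_nonneg w) (m-1-i)]
      _ = m := by simp
  calc |∑ i ∈ Finset.range m, u ^ i * w ^ (m - 1 - i)| * |u - w|
      ≤ (m : ℝ) * |u - w| := by gcongr

lemma flux_lip_pos (a : ℝ) (ha : 0 ≤ a) (n : ℕ) {s t : ℝ}
    (hs0 : 0 ≤ s) (hs2 : s ≤ 2) (ht0 : 0 ≤ t) (ht2 : t ≤ 2) :
    |flux a n s - flux a n t| ≤ a * n * ((2 * n - 1 : ℕ) : ℝ) * |s - t| := by
  rw [flux_of_nonneg a n hs0, flux_of_nonneg a n ht0, ← mul_sub, abs_mul]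
  have h1 : |(s - 1) ^ (2 * n - 1) - (t - 1) ^ (2 * n - 1)|
      ≤ ((2 * n - 1 : ℕ) : ℝ) * |s - t| := by
    have := abs_pow_sub_pow_le' (s - 1) (t - 1) (2 * n - 1)
      (abs_le.mpr ⟨by linarith, by linarith⟩) (abs_le.mpr ⟨by linarith, by linarith⟩)
    simpa using this
  have han : |a * (n : ℝ)| = a * n := abs_of_nonneg (by positivity)
  rw [han]
  calc a * (n : ℝ) * |(s - 1) ^ (2 * n - 1) - (t - 1) ^ (2 * n - 1)|
      ≤ a * (n : ℝ) * (((2 * n - 1 : ℕ) : ℝ) * |s - t|) := by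
        exact mul_le_mul_of_nonneg_left h1 (by positivity)
    _ = a * n * ((2 * n - 1 : ℕ) : ℝ) * |s - t| := by ring

lemma flux_lip_neg (a : ℝ) (ha : 0 ≤ a) (n : ℕ) {s t : ℝ}
    (hs0 : s < 0) (hs2 : -2 ≤ s) (ht0 : t < 0) (ht2 : -2 ≤ t) :
    |flux a n s - flux a n t| ≤ a * n * ((2 * n - 1 : ℕ) : ℝ) * |s - t| := by
  rw [flux_of_neg a n hs0, flux_of_neg a n ht0, ← mul_sub, abs_mul]
  have h1 : |(s + 1) ^ (2 * n - 1) - (t + 1) ^ (2 * n - 1)|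
      ≤ ((2 * n - 1 : ℕ) : ℝ) * |s - t| := by
    have := abs_pow_sub_pow_le' (s + 1) (t + 1) (2 * n - 1)
      (abs_le.mpr ⟨by linarith, by linarith⟩) (abs_le.mpr ⟨by linarith, by linarith⟩)
    simpa using this
  have han : |a * (n : ℝ)| = a * n := abs_of_nonneg (by positivity)
  rw [han]
  calc a * (n : ℝ) * |(s + 1) ^ (2 * n - 1) - (t + 1) ^ (2 * n - 1)|
      ≤ a * (n : ℝ) * (((2 * n - 1 : ℕ) : ℝ) * |s - t|) :=
        mul_le_mul_of_nonneg_left h1 (by positivity)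
    _ = a * n * ((2 * n - 1 : ℕ) : ℝ) * |s - t| := by ring

lemma flux_neg_small (a : ℝ) (ha : 0 ≤ a) (n : ℕ) {d : ℝ} (hd0 : 0 < d) (hd : d ≤ 1/2) :
    a * n * (1/2) ^ (2 * n - 1) ≤ flux a n (-d) := by
  rw [flux_of_neg a n (by linarith)]
  have h : ((1:ℝ)/2) ^ (2*n-1) ≤ (-d + 1) ^ (2*n-1) :=
    pow_le_pow_left₀ (by norm_num) (by linarith) _
  exact mul_le_mul_of_nonneg_left h (by positivity)

lemma flux_pos_small (a : ℝ) (ha : 0 ≤ a) (n : ℕ) (hn : 0 < n) {d : ℝ}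
    (hd0 : 0 ≤ d) (hd : d ≤ 1/2) :
    flux a n d ≤ -(a * n * (1/2) ^ (2 * n - 1)) := by
  rw [flux_of_nonneg a n hd0]
  have hodd : Odd (2*n-1) := ⟨n - 1, by omega⟩
  have h1 : (d - 1) ^ (2*n-1) = -((1 - d) ^ (2*n-1)) := by
    rw [show d - 1 = -(1 - d) by ring, hodd.neg_pow]
  rw [h1]
  have h : ((1:ℝ)/2) ^ (2*n-1) ≤ (1 - d) ^ (2*n-1) :=
    pow_le_pow_left₀ (by norm_num) (by linarith) _
  have := mul_le_mul_of_nonneg_left h (show (0:ℝ) ≤ a * n by positivity)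
  linarith

lemma flux_nonneg_of (a : ℝ) (ha : 0 ≤ a) (n : ℕ) {s : ℝ} (h1 : -1 ≤ s) (h2 : s < 0) :
    0 ≤ flux a n s := by
  rw [flux_of_neg a n h2]
  exact mul_nonneg (by positivity) (pow_nonneg (by linarith) _)

lemma flux_nonpos_of (a : ℝ) (ha : 0 ≤ a) (n : ℕ) (hn : 0 < n) {s : ℝ}
    (h1 : 0 ≤ s) (h2 : s ≤ 1) :
    flux a n s ≤ 0 := by
  rw [flux_of_nonneg a n h1]
  have hodd : Odd (2*n-1) := ⟨n - 1, by omega⟩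
  exact mul_nonpos_of_nonneg_of_nonpos (by positivity) (hodd.pow_nonpos (by linarith))

lemma keyGood (a : ℝ) (ha : 0 < a) (n : ℕ) (hn : 0 < n) {x y : ℝ}
    (hx0 : 0 < x) (hy1 : y < 1) (hxy : x < y) (hd : y - x ≤ 1/2) :
    a * n * (1/2) ^ (2*n-1) - 2 * (a * n * ((2*n-1 : ℕ) : ℝ)) * (y - x)
      ≤ -flux a n (2 * y) - (flux a n (y - x) - flux a n (y + x)) := by
  have hL0 : (0:ℝ) ≤ a * n * ((2*n-1 : ℕ) : ℝ) := by positivity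
  have h1 : flux a n (y - x) ≤ -(a * n * (1/2) ^ (2*n-1)) :=
    flux_pos_small a ha.le n hn (by linarith) hd
  have h2 : |flux a n (y + x) - flux a n (2 * y)|
      ≤ a * n * ((2*n-1 : ℕ) : ℝ) * (y - x) := by
    have := flux_lip_pos a ha.le n (s := y + x) (t := 2 * y)
      (by linarith) (by linarith) (by linarith) (by linarith)
    have habs : |y + x - 2 * y| = y - x := by
      rw [abs_of_nonpos (by linarith)]; ring
    rwa [habs] at this
  have h2' := (abs_le.mp h2).1
  have hLd : 0 ≤ a * n * ((2*n-1 : ℕ) : ℝ) * (y - x) :=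
    mul_nonneg hL0 (by linarith)
  linarith

lemma key (a : ℝ) (ha : 0 < a) (n : ℕ) (hn : 0 < n) {x y z : ℝ}
    (hx0 : 0 < x) (hy1 : y < 1) (hz0 : 0 < z) (hz1 : z < 1) (hxy : x < y) (hd : y - x ≤ 1/2) :
    -(2 * (a * n * ((2*n-1 : ℕ) : ℝ)) * (y - x)) ≤
      (if z = y then -flux a n (2 * y) else flux a n (z - y) - flux a n (z + y)) -
      (if z = x then -flux a n (2 * x) else flux a n (z - x) - flux a n (z + x)) := by
  have hL0 : (0:ℝ) ≤ a * n * ((2*n-1 : ℕ) : ℝ) := by positivity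
  have hLd : 0 ≤ a * n * ((2*n-1 : ℕ) : ℝ) * (y - x) := mul_nonneg hL0 (by linarith)
  have hg0 : (0:ℝ) < a * n * (1/2) ^ (2*n-1) := by positivity
  by_cases hzy : z = y
  · subst hzy
    rw [if_pos rfl, if_neg (ne_of_gt hxy)]
    have := keyGood a ha n hn hx0 hy1 hxy hd
    linarith
  by_cases hzx : z = x
  · subst hzx
    rw [if_neg hzy, if_pos rfl]
    have h1 : a * n * (1/2) ^ (2*n-1) ≤ flux a n (z - y) := by
      have := flux_neg_small a ha.le n (d := y - z) (by linarith) hd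
      rwa [show -(y - z) = z - y by ring] at this
    have h2 : |flux a n (z + y) - flux a n (2 * z)|
        ≤ a * n * ((2*n-1 : ℕ) : ℝ) * (y - z) := by
      have := flux_lip_pos a ha.le n (s := z + y) (t := 2 * z)
        (by linarith) (by linarith) (by linarith) (by linarith)
      have habs : |z + y - 2 * z| = y - z := by
        rw [abs_of_nonneg (by linarith)]; ring
      rwa [habs] at this
    have h2' := (abs_le.mp h2).2
    linarith
  · rw [if_neg hzy, if_neg hzx]
    have h2 : |flux a n (z + y) - flux a n (z + x)|
        ≤ a * n * ((2*n-1 : ℕ) : ℝ) * (y - x) := by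
      have := flux_lip_pos a ha.le n (s := z + y) (t := z + x)
        (by linarith) (by linarith) (by linarith) (by linarith)
      have habs : |z + y - (z + x)| = y - x := by
        rw [abs_of_nonneg (by linarith)]; ring
      rwa [habs] at this
    have h2' := abs_le.mp h2
    rcases lt_trichotomy z x with h | h | h
    · -- z < x : both args negative
      have h1 : |flux a n (z - y) - flux a n (z - x)|
          ≤ a * n * ((2*n-1 : ℕ) : ℝ) * (y - x) := by
        have := flux_lip_neg a ha.le n (s := z - y) (t := z - x)
          (by linarith) (by linarith) (by linarith) (by linarith)
        have habs : |z - y - (z - x)| = y - x := by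
          rw [abs_of_nonpos (by linarith)]; ring
        rwa [habs] at this
      have h1' := abs_le.mp h1
      linarith
    · exact absurd h hzx
    · rcases lt_trichotomy z y with h' | h' | h'
      · -- x < z < y : repulsion
        have h1a : 0 ≤ flux a n (z - y) :=
          flux_nonneg_of a ha.le n (by linarith) (by linarith)
        have h1b : flux a n (z - x) ≤ 0 :=
          flux_nonpos_of a ha.le n hn (by linarith) (by linarith)
        linarith
      · exact absurd h' hzy
      · -- z > y : both args nonneg
        have h1 : |flux a n (z - y) - flux a n (z - x)|
            ≤ a * n * ((2*n-1 : ℕ) : ℝ) * (y - x) := by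
          have := flux_lip_pos a ha.le n (s := z - y) (t := z - x)
            (by linarith) (by linarith) (by linarith) (by linarith)
          have habs : |z - y - (z - x)| = y - x := by
            rw [abs_of_nonpos (by linarith)]; ring
          rwa [habs] at this
        have h1' := abs_le.mp h1
        linarith

lemma sum_split2 {α : Type*} [Fintype α] (a : ℝ) (n : ℕ) (c u : α → ℝ) (yv : ℝ) :
    ((∑ k ∈ Finset.univ.filter (fun k => u k ≠ yv),
        c k * (flux a n (u k - yv) - flux a n (u k + yv))) -
      ∑ k ∈ Finset.univ.filter (fun k => u k = yv), c k * flux a n (2 * yv))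
    = ∑ k, c k * (if u k = yv then -flux a n (2 * yv)
        else flux a n (u k - yv) - flux a n (u k + yv)) := by
  have h : ∀ k, c k * (if u k = yv then -flux a n (2 * yv)
      else flux a n (u k - yv) - flux a n (u k + yv))
      = (if u k = yv then -(c k * flux a n (2 * yv))
        else c k * (flux a n (u k - yv) - flux a n (u k + yv))) := by
    intro k; split_ifs <;> ring
  simp_rw [h]
  rw [Finset.sum_ite, Finset.sum_neg_distrib, neg_add_eq_sub]

/-- Distinctness of positions: for a weight matrix with positive entries and
identical rows, a solution of the gradient flow (given componentwise by the flux formula)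
with pairwise distinct initial positions in `(0,1)` keeps pairwise distinct positions
for all `t ≥ 0`; in particular the initial rank-order is preserved. -/
theorem stmt8 (a : ℝ) (ha : 0 < a) (n : ℕ) (hn : 0 < n) (N : ℕ)
    (W : Matrix (Fin N) (Fin N) ℝ)
    (hpos : ∀ i k, 0 < W i k) (hrows : ∀ i j k, W j k = W i k)
    (v : ℝ → Fin N → ℝ)
    (hmem : ∀ t ∈ Set.Ici (0 : ℝ), ∀ i, v t i ∈ Set.Ioo (0 : ℝ) 1)
    (hode : ∀ t ∈ Set.Ici (0 : ℝ), ∀ i, HasDerivAt (fun s => v s i)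
      ((∑ j ∈ Finset.univ.filter (fun j => v t j ≠ v t i),
          W i j * (flux a n (v t j - v t i) - flux a n (v t j + v t i))) -
        ∑ j ∈ Finset.univ.filter (fun j => v t j = v t i),
          W i j * flux a n (2 * v t i)) t)
    (hdist : ∀ i j, i ≠ j → v 0 i ≠ v 0 j) :
    (∀ t ∈ Set.Ici (0 : ℝ), ∀ i j, i ≠ j → v t i ≠ v t j) ∧
    (∀ t ∈ Set.Ici (0 : ℝ), ∀ i j, v 0 i < v 0 j → v t i < v t j) := by
  have hm1 : (1:ℕ) ≤ 2 * n - 1 := by omega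
  have hLpos : (0:ℝ) < a * n * ((2*n-1 : ℕ) : ℝ) := by
    have h1 : (0:ℝ) < ((2*n-1 : ℕ) : ℝ) := by exact_mod_cast hm1
    have h2 : (0:ℝ) < (n : ℝ) := by exact_mod_cast hn
    positivity
  have hg0pos : (0:ℝ) < a * n * (1/2) ^ (2*n-1) := by
    have h2 : (0:ℝ) < (n : ℝ) := by exact_mod_cast hn
    positivity
  have main : ∀ t ∈ Set.Ici (0 : ℝ), ∀ i j, v 0 i < v 0 j → v t i < v t j := by
    intro T hT i j hij
    set L : ℝ := a * n * ((2*n-1 : ℕ) : ℝ) with hLdef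
    set g0 : ℝ := a * n * (1/2) ^ (2*n-1) with hg0def
    set K : ℝ := ∑ k, W i k with hKdef
    have hK : 0 < K := Finset.sum_pos (fun k _ => hpos i k) ⟨i, Finset.mem_univ i⟩
    set δ : ℝ := min (1/2) (W i j * g0 / (4 * L * K + 1)) with hδdef
    have hδ0 : 0 < δ := by
      refine lt_min (by norm_num) ?_
      have := hpos i j
      positivity
    have hδhalf : δ ≤ 1/2 := min_le_left _ _
    -- continuity of the difference on Ici 0
    have hgcont : ContinuousOn (fun s => v s j - v s i) (Set.Ici (0:ℝ)) := by
      intro u hu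
      exact (((hode u hu j).sub (hode u hu i)).continuousAt).continuousWithinAt
    -- the main derivative estimate
    have hderiv : ∀ s : ℝ, 0 ≤ s → 0 < v s j - v s i → v s j - v s i < δ →
        0 < deriv (fun u => v u j - v u i) s := by
      intro s hs0 hgs hgsδ
      have hsI : s ∈ Set.Ici (0:ℝ) := hs0
      have hds := (hode s hsI j).sub (hode s hsI i)
      refine lt_of_lt_of_eq ?_ hds.deriv.symm
      obtain ⟨hx0, hx1⟩ := hmem s hsI i
      obtain ⟨hy0, hy1⟩ := hmem s hsI j
      have hxy : v s i < v s j := by linarith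
      have hdhalf : v s j - v s i ≤ 1/2 := by
        have := lt_of_lt_of_le hgsδ hδhalf; linarith
      simp only [hrows i j]
      rw [sum_split2 a n (W i) (v s) (v s j), sum_split2 a n (W i) (v s) (v s i),
        ← Finset.sum_sub_distrib]
      have hsum : ∀ k ∈ Finset.univ,
          (if k = j then W i j * (g0 - 2 * L * (v s j - v s i))
            else W i k * (-(2 * L * (v s j - v s i))))
          ≤ W i k * (if v s k = v s j then -flux a n (2 * v s j)
              else flux a n (v s k - v s j) - flux a n (v s k + v s j)) -
            W i k * (if v s k = v s i then -flux a n (2 * v s i)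
              else flux a n (v s k - v s i) - flux a n (v s k + v s i)) := by
        intro k _
        rw [← mul_sub]
        by_cases hk : k = j
        · subst hk
          rw [if_pos rfl, if_pos rfl, if_neg (ne_of_gt hxy)]
          refine mul_le_mul_of_nonneg_left ?_ (hpos i k).le
          have := keyGood a ha n hn hx0 hy1 hxy hdhalf
          rw [hg0def, hLdef]
          linarith
        · rw [if_neg hk]
          refine mul_le_mul_of_nonneg_left ?_ (hpos i k).le
          obtain ⟨hz0, hz1⟩ := hmem s hsI k
          have := key a ha n hn (z := v s k) hx0 hy1 hz0 hz1 hxy hdhalf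
          rw [hLdef]
          linarith
      refine lt_of_lt_of_le ?_ (Finset.sum_le_sum hsum)
      rw [← Finset.add_sum_erase _ _ (Finset.mem_univ j), if_pos rfl]
      have herase : ∑ k ∈ Finset.univ.erase j,
          (if k = j then W i j * (g0 - 2 * L * (v s j - v s i))
            else W i k * (-(2 * L * (v s j - v s i))))
          = (∑ k ∈ Finset.univ.erase j, W i k) * (-(2 * L * (v s j - v s i))) := by
        rw [Finset.sum_mul]
        refine Finset.sum_congr rfl fun k hk => ?_
        rw [if_neg (Finset.ne_of_mem_erase hk)]
      rw [herase]
      have hKsplit : W i j + ∑ k ∈ Finset.univ.erase j, W i k = K :=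
        Finset.add_sum_erase _ _ (Finset.mem_univ j)
      set S : ℝ := ∑ k ∈ Finset.univ.erase j, W i k with hSdef
      have hWij := hpos i j
      have hδ2 : v s j - v s i < W i j * g0 / (4 * L * K + 1) :=
        lt_of_lt_of_le hgsδ (min_le_right _ _)
      have hden : (0:ℝ) < 4 * L * K + 1 := by positivity
      rw [div_eq_mul_inv] at hδ2
      have hδ3 : (v s j - v s i) * (4 * L * K + 1) < W i j * g0 := by
        rw [← lt_div_iff₀ hden]
        rw [div_eq_mul_inv]
        exact hδ2
      have hLK : 0 < L * K := mul_pos hLpos hK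
      nlinarith [mul_pos hLpos hgs, mul_pos (mul_pos hLpos hgs) hK,
        mul_nonneg (mul_nonneg hLpos.le hgs.le) (sub_nonneg.mpr (le_of_eq hKsplit.symm))]
    -- topological argument
    by_contra hcon
    push_neg at hcon
    set B : Set ℝ := Set.Ici (0:ℝ) ∩ (fun s => v s j - v s i) ⁻¹' {0} with hBdef
    have hBclosed : IsClosed B :=
      hgcont.preimage_isClosed_of_isClosed isClosed_Ici isClosed_singleton
    have hBbdd : BddBelow B := ⟨0, fun x hx => hx.1⟩
    have h00 : 0 < v 0 j - v 0 i := sub_pos.mpr hij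
    have hIVT : ∀ u : ℝ, 0 ≤ u → v u j - v u i ≤ 0 → ∃ r, r ∈ B ∧ r ≤ u := by
      intro u hu0 hu
      have hsub : Set.Icc (0:ℝ) u ⊆ Set.Ici (0:ℝ) := fun x hx => hx.1
      have := intermediate_value_Icc' hu0 (hgcont.mono hsub)
      have h0mem : (0:ℝ) ∈ Set.Icc (v u j - v u i) (v 0 j - v 0 i) := ⟨hu, h00.le⟩
      obtain ⟨r, hr, hfr⟩ := this h0mem
      exact ⟨r, ⟨hr.1, hfr⟩, hr.2⟩
    have hBne : B.Nonempty := by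
      obtain ⟨r, hrB, _⟩ := hIVT T hT (by linarith)
      exact ⟨r, hrB⟩
    set t₁ : ℝ := sInf B with ht₁def
    have ht₁B : t₁ ∈ B := hBclosed.csInf_mem hBne hBbdd
    have ht₁0 : 0 ≤ t₁ := ht₁B.1
    have hgt₁ : v t₁ j - v t₁ i = 0 := ht₁B.2
    have ht₁pos : 0 < t₁ := by
      rcases ht₁0.lt_or_eq with h | h
      · exact h
      · exfalso; rw [← h] at hgt₁; linarith
    have hpre : ∀ u : ℝ, 0 ≤ u → u < t₁ → 0 < v u j - v u i := by
      intro u hu0 hut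
      by_contra h
      push_neg at h
      obtain ⟨r, hrB, hru⟩ := hIVT u hu0 h
      have := csInf_le hBbdd hrB
      rw [← ht₁def] at this
      linarith
    -- continuity at t₁ gives a ball where the difference is < δ
    have hct₁ : ContinuousAt (fun s => v s j - v s i) t₁ :=
      ((hode t₁ ht₁B.1 j).sub (hode t₁ ht₁B.1 i)).continuousAt
    have hflt : (fun s => v s j - v s i) t₁ < δ := by
      simp only [hgt₁]; exact hδ0
    have hev : (fun s => v s j - v s i) ⁻¹' Set.Iio δ ∈ nhds t₁ :=
      hct₁ (Iio_mem_nhds hflt)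
    obtain ⟨ε, hε, hball⟩ := Metric.mem_nhds_iff.mp hev
    set σ : ℝ := max (t₁/2) (t₁ - ε/2) with hσdef
    have hσt₁ : σ < t₁ := max_lt (by linarith) (by linarith)
    have hσ0 : 0 < σ := lt_of_lt_of_le (half_pos ht₁pos) (le_max_left _ _)
    have hσε : t₁ - ε/2 ≤ σ := le_max_right _ _
    have hsubIci : Set.Icc σ t₁ ⊆ Set.Ici (0:ℝ) := fun x hx => le_trans hσ0.le hx.1
    have hmono : StrictMonoOn (fun u => v u j - v u i) (Set.Icc σ t₁) := by
      refine strictMonoOn_of_deriv_pos (convex_Icc σ t₁) (hgcont.mono hsubIci) ?_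
      intro x hx
      rw [interior_Icc] at hx
      have hx0 : (0:ℝ) ≤ x := le_of_lt (lt_of_le_of_lt hσ0.le hx.1)
      have hgx : 0 < v x j - v x i := hpre x hx0 hx.2
      have hgxδ : v x j - v x i < δ := by
        have hxb : x ∈ Metric.ball t₁ ε := by
          rw [Metric.mem_ball, Real.dist_eq, abs_of_nonpos (by linarith [hx.2])]
          linarith [hx.1, hx.2]
        exact hball hxb
      exact hderiv x hx0 hgx hgxδ
    have h1 : v σ j - v σ i < v t₁ j - v t₁ i :=
      hmono ⟨le_refl σ, hσt₁.le⟩ ⟨hσt₁.le, le_refl t₁⟩ hσt₁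
    have h2 : 0 < v σ j - v σ i := hpre σ hσ0.le hσt₁
    linarith
  refine ⟨?_, main⟩
  intro t ht i j hij
  rcases (hdist i j hij).lt_or_gt with h | h
  · exact ne_of_lt (main t ht i j h)
  · exact ne_of_gt (main t ht j i h)
end

section
/- Let a > 0, n = 1, and let W̃ = (w̃_{ij}) be an N×N matrix with nonnegative entries and positive diagonal. Define v* ∈ ℝ^N by v*_i = (Σ_{j=1}^i w̃_{ij} − (1/2)·w̃_{ii}) / (Σ_{j=1}^N w̃_{ij}) for i = 1, …, N, and assume the entries v*_1 < v*_2 < … < v*_N are strictly increasing and lie in (0,1). Then v* is a critical point of the energy E(·,W̃), i.e. it satisfies the steady-state equations 0 = Σ_{j<i} w̃_{ij}·(Φ_{a,1}(v*_j − v*_i) − Φ_{a,1}(v*_j + v*_i)) + Σ_{j>i} w̃_{ij}·(Φ_{a,1}(v*_j − v*_i) − Φ_{a,1}(v*_j + v*_i)) − w̃_{ii}·Φ_{a,1}(2v*_i) for all i = 1, …, N. -/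
open scoped Classical

/-- Flux with `n = 1`: `Φ_{a,1}(s) = a·(s−1)` for `s ≥ 0`, extended by
`Φ_{a,1}(s) = a·(s+1)` for `s < 0`. -/
noncomputable def flux1 (a : ℝ) (s : ℝ) : ℝ :=
  if 0 ≤ s then a * (s - 1) else a * (s + 1)

/-- For `n = 1`, the point `v*` with
`v*ᵢ = (Σ_{j≤i} w̃ᵢⱼ − w̃ᵢᵢ/2) / (Σⱼ w̃ᵢⱼ)`, assumed strictly increasing with entries in
`(0,1)`, satisfies the steady-state equations of the gradient flow. -/
theorem stmt11 (a : ℝ) (ha : 0 < a) (N : ℕ)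
    (W : Matrix (Fin N) (Fin N) ℝ) (hW : ∀ i j, 0 ≤ W i j) (hdiag : ∀ i, 0 < W i i)
    (vstar : Fin N → ℝ)
    (hdef : ∀ i, vstar i =
      ((∑ j ∈ Finset.univ.filter (fun j : Fin N => (j : ℕ) ≤ (i : ℕ)), W i j) - W i i / 2) /
        (∑ j, W i j))
    (hmono : StrictMono vstar)
    (hrange : ∀ i, vstar i ∈ Set.Ioo (0 : ℝ) 1) :
    ∀ i : Fin N, (0 : ℝ) =
      (∑ j ∈ Finset.univ.filter (fun j : Fin N => (j : ℕ) < (i : ℕ)),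
        W i j * (flux1 a (vstar j - vstar i) - flux1 a (vstar j + vstar i))) +
      (∑ j ∈ Finset.univ.filter (fun j : Fin N => (i : ℕ) < (j : ℕ)),
        W i j * (flux1 a (vstar j - vstar i) - flux1 a (vstar j + vstar i))) -
      W i i * flux1 a (2 * vstar i) := by

  intro i
  have hSpos : 0 < ∑ j, W i j := by
    have h1 : W i i ≤ ∑ j, W i j :=
      Finset.single_le_sum (fun j _ => hW i j) (Finset.mem_univ i)
    linarith [hdiag i]
  set A := ∑ j ∈ Finset.univ.filter (fun j : Fin N => (j : ℕ) < (i : ℕ)), W i j with hA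
  set B := ∑ j ∈ Finset.univ.filter (fun j : Fin N => (i : ℕ) < (j : ℕ)), W i j with hB
  have hle : ∑ j ∈ Finset.univ.filter (fun j : Fin N => (j : ℕ) ≤ (i : ℕ)), W i j
      = A + W i i := by
    have : Finset.univ.filter (fun j : Fin N => (j : ℕ) ≤ (i : ℕ))
        = insert i (Finset.univ.filter (fun j : Fin N => (j : ℕ) < (i : ℕ))) := by
      ext j
      simp only [Finset.mem_insert, Finset.mem_filter, Finset.mem_univ, true_and]
      constructor
      · intro h
        rcases lt_or_eq_of_le h with h | h
        · exact Or.inr h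
        · exact Or.inl (Fin.ext h)
      · rintro (rfl | h)
        · exact le_refl _
        · exact le_of_lt h
    rw [this, Finset.sum_insert (by simp)]
    ring
  have hsplit : ∑ j, W i j = A + W i i + B := by
    have h1 : ∑ j, W i j
        = (∑ j ∈ Finset.univ.filter (fun j : Fin N => (j : ℕ) ≤ (i : ℕ)), W i j)
        + ∑ j ∈ Finset.univ.filter (fun j : Fin N => ¬ (j : ℕ) ≤ (i : ℕ)), W i j :=
      (Finset.sum_filter_add_sum_filter_not _ _ _).symm
    have h2 : Finset.univ.filter (fun j : Fin N => ¬ (j : ℕ) ≤ (i : ℕ))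
        = Finset.univ.filter (fun j : Fin N => (i : ℕ) < (j : ℕ)) := by
      ext j; simp [not_le]
    rw [h1, h2, hle]
  have hv : vstar i * (∑ j, W i j) = A + W i i / 2 := by
    rw [hdef i, hle, div_mul_cancel₀ _ (ne_of_gt hSpos)]
    ring
  have hvpos : 0 < vstar i := (hrange i).1
  have hvlt : vstar i < 1 := (hrange i).2
  have hlt : ∀ j ∈ Finset.univ.filter (fun j : Fin N => (j : ℕ) < (i : ℕ)),
      W i j * (flux1 a (vstar j - vstar i) - flux1 a (vstar j + vstar i))
      = W i j * (a * (2 - 2 * vstar i)) := by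
    intro j hj
    have hji : (j : ℕ) < (i : ℕ) := (Finset.mem_filter.mp hj).2
    have hv' : vstar j < vstar i := hmono hji
    have h1 : flux1 a (vstar j - vstar i) = a * (vstar j - vstar i + 1) := by
      rw [flux1, if_neg (by linarith)]
    have h2 : flux1 a (vstar j + vstar i) = a * (vstar j + vstar i - 1) := by
      rw [flux1, if_pos (by have := (hrange j).1; linarith)]
    rw [h1, h2]; ring
  have hgt : ∀ j ∈ Finset.univ.filter (fun j : Fin N => (i : ℕ) < (j : ℕ)),
      W i j * (flux1 a (vstar j - vstar i) - flux1 a (vstar j + vstar i))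
      = W i j * (a * (-2 * vstar i)) := by
    intro j hj
    have hij : (i : ℕ) < (j : ℕ) := (Finset.mem_filter.mp hj).2
    have hv' : vstar i < vstar j := hmono hij
    have h1 : flux1 a (vstar j - vstar i) = a * (vstar j - vstar i - 1) := by
      rw [flux1, if_pos (by linarith)]
    have h2 : flux1 a (vstar j + vstar i) = a * (vstar j + vstar i - 1) := by
      rw [flux1, if_pos (by linarith)]
    rw [h1, h2]; ring
  have hd : flux1 a (2 * vstar i) = a * (2 * vstar i - 1) := by
    rw [flux1, if_pos (by linarith)]
  rw [Finset.sum_congr rfl hlt, Finset.sum_congr rfl hgt, hd,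
    ← Finset.sum_mul, ← Finset.sum_mul, ← hA, ← hB]
  have := hv
  rw [hsplit] at this
  nlinarith [this]
end
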